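/- arXiv:0805.0094 — 6 statements merged into one kernel-verified Lean document; each statement's English description precedes it below -/
import Mathlib

section
/- Let N and k be positive integers with N dividing k, write m = k/N, and let ζ = exp(πi/(2N)) ∈ ℂ. Then the function A ↦ (−1)^(N−1) · (A^(2kN) − A^(−2kN)) / (A^(2k) − A^(−2k)) tends to (−1)^(N−1+k−m) · N as A tends to ζ within the set {A ∈ ℂ : A ≠ 0 and A^(2k) ≠ A^(−2k)}. -/
open Complex Filter

private lemma ring_lemma_telescope (x : ℂ) (hx : x ≠ 0) (hne : x - x⁻¹ ≠ 0) (N : ℕ) :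
    (x ^ (N : ℤ) - x ^ (-(N : ℤ))) / (x - x⁻¹) =
      ∑ j ∈ Finset.range N, x ^ (2 * (j : ℤ) - ((N : ℤ) - 1)) := by
  rw [eq_comm, eq_div_iff hne]
  have hterm : ∀ j : ℕ, x ^ (2 * (j : ℤ) - ((N : ℤ) - 1)) * (x - x⁻¹)
      = x ^ (2 * ((j : ℤ) + 1) - (N : ℤ)) - x ^ (2 * (j : ℤ) - (N : ℤ)) := by
    intro j
    have h1 : x ^ (2 * (j : ℤ) - ((N : ℤ) - 1)) * x = x ^ (2 * ((j : ℤ) + 1) - (N : ℤ)) := by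
      rw [← zpow_add_one₀ hx]; ring_nf
    have h2 : x ^ (2 * (j : ℤ) - ((N : ℤ) - 1)) * x⁻¹ = x ^ (2 * (j : ℤ) - (N : ℤ)) := by
      rw [← zpow_sub_one₀ hx]; ring_nf
    rw [mul_sub, h1, h2]
  rw [Finset.sum_mul]
  calc ∑ j ∈ Finset.range N, x ^ (2 * (j : ℤ) - ((N : ℤ) - 1)) * (x - x⁻¹)
      = ∑ j ∈ Finset.range N,
        ((fun i : ℕ => x ^ (2 * (i : ℤ) - (N : ℤ))) (j + 1)
          - (fun i : ℕ => x ^ (2 * (i : ℤ) - (N : ℤ))) j) := by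
        refine Finset.sum_congr rfl fun j _ => ?_
        rw [hterm j]; push_cast; ring_nf
    _ = x ^ (2 * (N : ℤ) - (N : ℤ)) - x ^ (2 * ((0 : ℕ) : ℤ) - (N : ℤ)) :=
        Finset.sum_range_sub (fun i : ℕ => x ^ (2 * (i : ℤ) - (N : ℤ))) N
    _ = x ^ (N : ℤ) - x ^ (-(N : ℤ)) := by
        rw [show 2 * (N : ℤ) - (N : ℤ) = (N : ℤ) by ring,
          show 2 * ((0 : ℕ) : ℤ) - (N : ℤ) = -(N : ℤ) by push_cast; ring]

/-- Ring Lemma, case `N ∣ k`: the function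
`A ↦ (−1)^(N−1) · (A^(2kN) − A^(−2kN)) / (A^(2k) − A^(−2k))`
tends to `(−1)^(N−1+k−m) · N` (with `m = k/N`) as `A → exp(πi/(2N))`
within the set where `A ≠ 0` and `A^(2k) ≠ A^(−2k)`. -/
theorem ring_lemma_dvd (N k m : ℕ) (hN : 0 < N) (hk : 0 < k) (hdvd : N ∣ k)
    (hm : m = k / N) :
    Tendsto
      (fun A : ℂ =>
        (-1 : ℂ) ^ (N - 1) * (A ^ (2 * k * N : ℤ) - A ^ (-(2 * k * N : ℤ))) /
          (A ^ (2 * k : ℤ) - A ^ (-(2 * k : ℤ))))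
      (nhdsWithin (Complex.exp (Real.pi * Complex.I / (2 * N)))
        {A : ℂ | A ≠ 0 ∧ A ^ (2 * k : ℤ) ≠ A ^ (-(2 * k : ℤ))})
      (nhds ((-1 : ℂ) ^ ((N : ℤ) - 1 + k - m) * N)) := by
  have hkNm : k = N * m := by
    subst hm; exact (Nat.mul_div_cancel' hdvd).symm
  set ζ : ℂ := Complex.exp (Real.pi * Complex.I / (2 * N)) with hζ
  set g : ℂ → ℂ := fun A =>
    (-1 : ℂ) ^ (N - 1) *
      ∑ j ∈ Finset.range N, (A ^ (2 * (k : ℤ))) ^ (2 * (j : ℤ) - ((N : ℤ) - 1)) with hg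
  have hζ0 : ζ ≠ 0 := Complex.exp_ne_zero _
  have hNne : (N : ℂ) ≠ 0 := Nat.cast_ne_zero.mpr hN.ne'
  -- value of ζ ^ (2k)
  have hζ2k : ζ ^ (2 * (k : ℤ)) = (-1 : ℂ) ^ m := by
    have h1 : ζ ^ (2 * (k : ℤ))
        = Complex.exp (((2 * (k : ℤ)) : ℤ) * (Real.pi * Complex.I / (2 * N))) := by
      rw [Complex.exp_int_mul]
    have h2 : (((2 * (k : ℤ)) : ℤ) : ℂ) * (Real.pi * Complex.I / (2 * N))
        = ((m : ℤ) : ℂ) * (Real.pi * Complex.I) := by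
      have hkc : (k : ℂ) = N * m := by exact_mod_cast congrArg (Nat.cast : ℕ → ℂ) hkNm
      push_cast
      rw [hkc]
      field_simp
    rw [h1, h2, Complex.exp_int_mul]
    norm_num [Complex.exp_pi_mul_I]
  -- functions agree on the set
  have heq : ∀ A ∈ {A : ℂ | A ≠ 0 ∧ A ^ (2 * k : ℤ) ≠ A ^ (-(2 * k : ℤ))},
      (-1 : ℂ) ^ (N - 1) * (A ^ (2 * k * N : ℤ) - A ^ (-(2 * k * N : ℤ))) /
          (A ^ (2 * k : ℤ) - A ^ (-(2 * k : ℤ))) = g A := by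
    rintro A ⟨hA0, hAne⟩
    have hx0 : A ^ (2 * (k : ℤ)) ≠ 0 := zpow_ne_zero _ hA0
    have hinv : A ^ (-(2 * (k : ℤ))) = (A ^ (2 * (k : ℤ)))⁻¹ := by rw [zpow_neg]
    have hxne : A ^ (2 * (k : ℤ)) - (A ^ (2 * (k : ℤ)))⁻¹ ≠ 0 := by
      rw [sub_ne_zero, ← hinv]; exact hAne
    have hnum : A ^ (2 * (k : ℤ) * (N : ℤ)) = (A ^ (2 * (k : ℤ))) ^ ((N : ℕ) : ℤ) := by
      rw [zpow_mul]
    have hnum' : A ^ (-(2 * (k : ℤ) * (N : ℤ))) = (A ^ (2 * (k : ℤ))) ^ (-((N : ℕ) : ℤ)) := by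
      rw [show (-(2 * (k : ℤ) * (N : ℤ))) = 2 * (k : ℤ) * (-(N : ℤ)) by ring, zpow_mul]
    simp only [hg]
    rw [hnum, hnum', hinv, mul_div_assoc,
      ring_lemma_telescope (A ^ (2 * (k : ℤ))) hx0 hxne N]
  -- continuity of g at ζ
  have hcont : ContinuousAt g ζ := by
    refine continuousAt_const.mul (tendsto_finset_sum _ fun j _ => ?_)
    refine ContinuousAt.zpow₀ ?_ _ (Or.inl ?_)
    · exact continuousAt_zpow₀ _ _ (Or.inl hζ0)
    · exact zpow_ne_zero _ hζ0
  have htend : Tendsto g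
      (nhdsWithin ζ {A : ℂ | A ≠ 0 ∧ A ^ (2 * k : ℤ) ≠ A ^ (-(2 * k : ℤ))}) (nhds (g ζ)) :=
    hcont.continuousWithinAt.tendsto
  -- compute g ζ
  have hgζ : g ζ = (-1 : ℂ) ^ ((N : ℤ) - 1 + k - m) * N := by
    have hterm : ∀ j : ℕ, ((-1 : ℂ) ^ m) ^ (2 * (j : ℤ) - ((N : ℤ) - 1))
        = (-1 : ℂ) ^ (m * (N - 1)) := by
      intro j
      rcases Nat.even_or_odd m with h | h
      · rw [h.neg_one_pow, one_zpow, (h.mul_right (N - 1)).neg_one_pow]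
      · rw [h.neg_one_pow]
        have h2 : ((-1 : ℂ)) ^ (2 * (j : ℤ) - ((N : ℤ) - 1))
            = ((-1 : ℂ) ^ (2 : ℤ)) ^ (j : ℤ) * ((-1 : ℂ)) ^ (-((N : ℤ) - 1)) := by
          rw [← zpow_mul, ← zpow_add₀ (by norm_num : (-1 : ℂ) ≠ 0)]; ring_nf
        rw [h2]
        have hNcast : (N : ℤ) - 1 = ((N - 1 : ℕ) : ℤ) := by omega
        rw [hNcast, zpow_neg]
        simp only [zpow_natCast]
        have hsq : ((-1 : ℂ) ^ (N - 1)) * ((-1 : ℂ) ^ (N - 1)) = 1 := by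
          rw [← pow_add, show (N - 1) + (N - 1) = 2 * (N - 1) by ring, pow_mul]; norm_num
        rw [inv_eq_of_mul_eq_one_right hsq]
        norm_num
        rcases Nat.even_or_odd (N - 1) with hN1 | hN1
        · rw [hN1.neg_one_pow, (hN1.mul_left m).neg_one_pow]
        · rw [hN1.neg_one_pow, (h.mul hN1).neg_one_pow]
    have hexp : ((N : ℤ) - 1 + k - m) = (((N - 1) + m * (N - 1) : ℕ) : ℤ) := by
      have hkz : (k : ℤ) = (N : ℤ) * m := by exact_mod_cast congrArg (Nat.cast : ℕ → ℤ) hkNm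
      push_cast [Nat.cast_sub hN]
      rw [hkz]; ring
    simp only [hg, hζ2k]
    rw [Finset.sum_congr rfl fun j _ => hterm j, Finset.sum_const, Finset.card_range,
      nsmul_eq_mul, hexp, zpow_natCast, pow_add]
    ring
  rw [← hgζ]
  exact htend.congr' (Filter.eventuallyEq_of_mem self_mem_nhdsWithin
    fun A hA => (heq A hA).symm)
end

section
/- Let k ≥ 1 be an integer and set N = 2k+1 and ζ = exp(πi/(2N)) ∈ ℂ. Then the function A ↦ (−1)^(3k) · [3k+1]!_A · ([k]!_A)^3 / ([2k+1]_A · ([2k]!_A)^3) tends to 1 as A tends to ζ within the set {A ∈ ℂ : A ≠ 0 and A^(2j) ≠ A^(−2j) for every integer j with 1 ≤ j ≤ 3k+1}. -/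
open Complex Filter

/-- The quantum integer `[m]_A = (A^(2m) − A^(−2m))/(A^2 − A^(−2))`. -/
noncomputable def qint (A : ℂ) (m : ℕ) : ℂ :=
  (A ^ (2 * m : ℤ) - A ^ (-(2 * m : ℤ))) / (A ^ (2 : ℤ) - A ^ (-2 : ℤ))

/-- The quantum factorial `[m]!_A = ∏_{j=1}^m [j]_A`. -/
noncomputable def qfact (A : ℂ) (m : ℕ) : ℂ :=
  ∏ j ∈ Finset.Icc 1 m, qint A j

lemma qint_sq (A : ℂ) (m : ℕ) :
    qint A m = ((A^(2:ℤ))^(m:ℤ) - ((A^(2:ℤ))^(m:ℤ))⁻¹) / ((A^(2:ℤ)) - (A^(2:ℤ))⁻¹) := by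
  unfold qint
  rw [zpow_mul, zpow_neg, zpow_mul, show ((-2:ℤ)) = -(2:ℤ) from rfl, zpow_neg]

lemma Icc_one_eq_Ioc (n : ℕ) : Finset.Icc 1 n = Finset.Ioc 0 n := by
  ext x; simp [Nat.succ_le_iff]

/-- For `N = 2k+1`, the ratio `⟨N N N⟩/⟨N⟩ = (−1)^{3k}[3k+1]!([k]!)^3/([2k+1]([2k]!)^3)`
tends to `1` as `A → exp(πi/(2N))` within the set of nonzero `A` with
`A^(2j) ≠ A^(−2j)` for `1 ≤ j ≤ 3k+1`. -/
theorem theta_ratio_tendsto_one (k : ℕ) (hk : 1 ≤ k) :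
    Tendsto
      (fun A : ℂ =>
        (-1 : ℂ) ^ (3 * k) * qfact A (3 * k + 1) * (qfact A k) ^ 3 /
          (qint A (2 * k + 1) * (qfact A (2 * k)) ^ 3))
      (nhdsWithin (Complex.exp (Real.pi * Complex.I / (2 * (2 * k + 1))))
        {A : ℂ | A ≠ 0 ∧ ∀ j : ℕ, 1 ≤ j → j ≤ 3 * k + 1 →
          A ^ (2 * j : ℤ) ≠ A ^ (-(2 * j : ℤ))})
      (nhds 1) := by
  set ζ : ℂ := Complex.exp (Real.pi * Complex.I / (2 * (2 * k + 1))) with hζdef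
  have hζ0 : ζ ≠ 0 := Complex.exp_ne_zero _
  set P : ℂ := ζ ^ (2:ℤ) with hPdef
  have hP0 : P ≠ 0 := zpow_ne_zero _ hζ0
  -- P is a primitive (2(2k+1))-th root of unity
  have hprim : IsPrimitiveRoot P (2*(2*k+1)) := by
    have h := Complex.isPrimitiveRoot_exp (2*(2*k+1)) (by omega)
    have hPe : P = Complex.exp (2 * Real.pi * Complex.I / ((2*(2*k+1) : ℕ) : ℂ)) := by
      rw [hPdef, hζdef, show ((2:ℤ)) = ((2:ℕ):ℤ) from rfl, zpow_natCast,
        ← Complex.exp_nat_mul]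
      congr 1
      have hne : (2 * (2 * (k:ℂ) + 1)) ≠ 0 := by
        intro h
        have : (2 * (2 * (k:ℝ) + 1)) = 0 := by exact_mod_cast h
        nlinarith [Nat.cast_nonneg (α := ℝ) k]
      push_cast
      field_simp
    rw [hPe]; exact h
  -- P^(2k+1) = -1
  have hPN : P ^ (2*k+1) = -1 := by
    have h2 : (P ^ (2*k+1))^2 = 1 := by
      rw [← pow_mul, mul_comm]; exact hprim.pow_eq_one
    have h1 : P ^ (2*k+1) ≠ 1 := by
      intro h
      rw [hprim.pow_eq_one_iff_dvd] at h
      have hdvd := h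
      have := Nat.le_of_dvd (by omega) hdvd
      omega
    have h0 : (P^(2*k+1) - 1) * (P^(2*k+1) + 1) = 0 := by linear_combination h2
    rcases mul_eq_zero.mp h0 with h | h
    · exact absurd (sub_eq_zero.mp h) h1
    · linear_combination h
  have hpow_ne : ∀ j : ℕ, 1 ≤ j → j ≤ 2*k → P ^ (2*j) ≠ 1 := by
    intro j h1 h2 h
    rw [hprim.pow_eq_one_iff_dvd] at h
    have := Nat.le_of_dvd (by omega) h
    omega
  have hden : P - P⁻¹ ≠ 0 := by
    rw [sub_ne_zero]
    intro h
    refine hpow_ne 1 le_rfl (by omega) ?_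
    have : P * P = 1 := by nth_rewrite 2 [h]; exact mul_inv_cancel₀ hP0
    rw [show 2*1 = 2 from rfl, sq]; exact this
  have hnum_ne : ∀ j:ℕ, 1 ≤ j → j ≤ 2*k → P^(j:ℤ) - (P^(j:ℤ))⁻¹ ≠ 0 := by
    intro j h1 h2 h
    rw [sub_eq_zero] at h
    refine hpow_ne j h1 h2 ?_
    have h3 : P^(j:ℤ) * P^(j:ℤ) = 1 := by
      nth_rewrite 2 [h]; exact mul_inv_cancel₀ (zpow_ne_zero _ hP0)
    have h4 : P^((j:ℤ)+(j:ℤ)) = 1 := by rw [zpow_add₀ hP0]; exact h3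
    rw [show ((j:ℤ)+(j:ℤ)) = ((2*j:ℕ):ℤ) by push_cast; ring, zpow_natCast] at h4
    exact h4
  have hQne : ∀ j, 1 ≤ j → j ≤ 2*k → qint ζ j ≠ 0 := by
    intro j h1 h2
    rw [qint_sq, ← hPdef]
    exact div_ne_zero (hnum_ne j h1 h2) hden
  have hNcast : ((2*k+1:ℕ):ℤ) = 2*(k:ℤ)+1 := by push_cast; ring
  have hshift : ∀ i:ℕ, qint ζ (2*k+1+i) = -qint ζ i := by
    intro i
    rw [qint_sq, qint_sq, ← hPdef]
    have e1 : P ^ ((2*k+1+i : ℕ):ℤ) = -P^(i:ℤ) := by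
      rw [show ((2*k+1+i : ℕ):ℤ) = ((2*k+1:ℕ):ℤ) + (i:ℤ) by push_cast; ring,
        zpow_add₀ hP0, zpow_natCast, hPN]
      ring
    rw [e1, inv_neg, ← neg_div]
    congr 1
    ring
  have hflip : ∀ i:ℕ, 1 ≤ i → i ≤ 2*k+1 → qint ζ (2*k+1-i) = qint ζ i := by
    intro i h1 h2
    rw [qint_sq, qint_sq, ← hPdef]
    have e1 : P ^ ((2*k+1-i : ℕ):ℤ) = -(P^(i:ℤ))⁻¹ := by
      rw [show ((2*k+1-i : ℕ):ℤ) = ((2*k+1:ℕ):ℤ) - (i:ℤ) by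
          rw [Nat.cast_sub h2], zpow_sub₀ hP0, zpow_natCast, hPN]
      field_simp
    rw [e1, inv_neg, inv_inv]
    congr 1
    ring
  have hFk0 : qfact ζ k ≠ 0 := by
    unfold qfact
    rw [Finset.prod_ne_zero_iff]
    intro j hj
    rw [Finset.mem_Icc] at hj
    exact hQne j hj.1 (by omega)
  have hF2k : qfact ζ (2*k) = (qfact ζ k)^2 := by
    unfold qfact
    rw [Icc_one_eq_Ioc, Icc_one_eq_Ioc,
      ← Finset.prod_Ioc_consecutive _ (Nat.zero_le k) (by omega : k ≤ 2*k)]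
    have h2 : ∏ j ∈ Finset.Ioc k (2*k), qint ζ j = ∏ j ∈ Finset.Ioc 0 k, qint ζ j := by
      refine Finset.prod_nbij' (fun a => 2*k+1-a) (fun a => 2*k+1-a) ?_ ?_ ?_ ?_ ?_
      · intro a ha; simp only [Finset.mem_Ioc] at ha ⊢; omega
      · intro a ha; simp only [Finset.mem_Ioc] at ha ⊢; omega
      · intro a ha; simp only [Finset.mem_Ioc] at ha
        show 2*k+1-(2*k+1-a) = a; omega
      · intro a ha; simp only [Finset.mem_Ioc] at ha
        show 2*k+1-(2*k+1-a) = a; omega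
      · intro a ha
        simp only [Finset.mem_Ioc] at ha
        show qint ζ a = qint ζ (2*k+1-a)
        calc qint ζ a = qint ζ (2*k+1-(2*k+1-a)) := by congr 1; omega
          _ = qint ζ (2*k+1-a) := hflip _ (by omega) (by omega)
    rw [h2, sq]
  have hT : ∏ j ∈ Finset.Ioc (2*k+1) (3*k+1), qint ζ j = (-1)^k * qfact ζ k := by
    have h2 : ∏ j ∈ Finset.Ioc (2*k+1) (3*k+1), qint ζ j
        = ∏ j ∈ Finset.Ioc 0 k, -qint ζ j := by
      refine Finset.prod_nbij' (fun a => a - (2*k+1)) (fun a => 2*k+1+a) ?_ ?_ ?_ ?_ ?_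
      · intro a ha; simp only [Finset.mem_Ioc] at ha ⊢; omega
      · intro a ha; simp only [Finset.mem_Ioc] at ha ⊢; omega
      · intro a ha; simp only [Finset.mem_Ioc] at ha
        show 2*k+1+(a-(2*k+1)) = a; omega
      · intro a ha; simp only [Finset.mem_Ioc] at ha
        show 2*k+1+a-(2*k+1) = a; omega
      · intro a ha
        simp only [Finset.mem_Ioc] at ha
        show qint ζ a = -qint ζ (a - (2*k+1))
        rw [← hshift (a - (2*k+1))]
        congr 1; omega
    rw [h2]
    calc ∏ j ∈ Finset.Ioc 0 k, -qint ζ j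
        = ∏ j ∈ Finset.Ioc 0 k, (-1) * qint ζ j := by simp
      _ = (∏ _j ∈ Finset.Ioc 0 k, (-1:ℂ)) * ∏ j ∈ Finset.Ioc 0 k, qint ζ j :=
          Finset.prod_mul_distrib
      _ = (-1)^k * qfact ζ k := by
          rw [Finset.prod_const, Nat.card_Ioc]
          unfold qfact
          rw [Icc_one_eq_Ioc]
          norm_num
  -- the auxiliary (continuous-at-ζ) function
  set g : ℂ → ℂ := fun A =>
    (-1 : ℂ) ^ (3 * k) *
      (qfact A (2 * k) * ∏ j ∈ Finset.Ioc (2*k+1) (3*k+1), qint A j) *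
        (qfact A k) ^ 3 / (qfact A (2 * k)) ^ 3 with hgdef
  -- continuity of each qint at ζ
  have hζden : ζ ^ (2:ℤ) - ζ ^ (-2:ℤ) ≠ 0 := by
    rw [show ((-2:ℤ)) = -(2:ℤ) from rfl, zpow_neg, ← hPdef]
    exact hden
  have hqt : ∀ m : ℕ, Tendsto (fun A : ℂ => qint A m) (nhds ζ) (nhds (qint ζ m)) := by
    intro m
    unfold qint
    exact Tendsto.div
      (Tendsto.sub (continuousAt_zpow₀ ζ _ (Or.inl hζ0))
        (continuousAt_zpow₀ ζ _ (Or.inl hζ0)))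
      (Tendsto.sub (continuousAt_zpow₀ ζ _ (Or.inl hζ0))
        (continuousAt_zpow₀ ζ _ (Or.inl hζ0)))
      hζden
  have hqf : ∀ m : ℕ, Tendsto (fun A : ℂ => qfact A m) (nhds ζ) (nhds (qfact ζ m)) := by
    intro m
    unfold qfact
    exact tendsto_finset_prod _ fun j _ => hqt j
  have hTt : Tendsto (fun A : ℂ => ∏ j ∈ Finset.Ioc (2*k+1) (3*k+1), qint A j)
      (nhds ζ) (nhds (∏ j ∈ Finset.Ioc (2*k+1) (3*k+1), qint ζ j)) :=
    tendsto_finset_prod _ fun j _ => hqt j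
  have hgt : Tendsto g (nhds ζ) (nhds (g ζ)) := by
    rw [hgdef]
    exact Tendsto.div
      ((tendsto_const_nhds.mul ((hqf (2*k)).mul hTt)).mul ((hqf k).pow 3))
      ((hqf (2*k)).pow 3)
      (by rw [hF2k]; exact pow_ne_zero _ (pow_ne_zero _ hFk0))
  -- value of g at ζ
  have hgζ : g ζ = 1 := by
    rw [hgdef]
    simp only
    rw [hT, hF2k]
    have hsign : (-1:ℂ)^(3*k) * (-1:ℂ)^k = 1 := by
      rw [← pow_add, show 3*k+k = 2*(2*k) by ring, pow_mul]
      norm_num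
    rw [div_eq_one_iff_eq (pow_ne_zero _ (pow_ne_zero _ hFk0))]
    linear_combination ((qfact ζ k)^6) * hsign
  -- equality on the set
  have hEq : ∀ A : ℂ, (A ≠ 0 ∧ ∀ j : ℕ, 1 ≤ j → j ≤ 3 * k + 1 →
      A ^ (2 * j : ℤ) ≠ A ^ (-(2 * j : ℤ))) →
      g A = (-1 : ℂ) ^ (3 * k) * qfact A (3 * k + 1) * (qfact A k) ^ 3 /
          (qint A (2 * k + 1) * (qfact A (2 * k)) ^ 3) := by
    intro A hA
    obtain ⟨hA0, hAj⟩ := hA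
    have hdA : A ^ (2:ℤ) - A ^ (-2:ℤ) ≠ 0 := by
      have h1 := hAj 1 le_rfl (by omega)
      rw [sub_ne_zero]
      simpa using h1
    have hc : qint A (2*k+1) ≠ 0 := by
      unfold qint
      exact div_ne_zero (sub_ne_zero.mpr (hAj (2*k+1) (by omega) (by omega))) hdA
    have hsplit : qfact A (3*k+1) =
        qint A (2*k+1) * (qfact A (2*k) * ∏ j ∈ Finset.Ioc (2*k+1) (3*k+1), qint A j) := by
      unfold qfact
      rw [Icc_one_eq_Ioc,
        ← Finset.prod_Ioc_consecutive _ (by omega : 0 ≤ 2*k+1) (by omega : 2*k+1 ≤ 3*k+1),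
        ← Icc_one_eq_Ioc, Finset.prod_Icc_succ_top (by omega : 1 ≤ 2*k+1)]
      ring
    rw [hgdef]
    simp only
    rw [hsplit]
    rw [show (-1 : ℂ) ^ (3 * k) *
        (qint A (2*k+1) * (qfact A (2*k) * ∏ j ∈ Finset.Ioc (2*k+1) (3*k+1), qint A j)) *
          (qfact A k) ^ 3 = qint A (2*k+1) * ((-1 : ℂ) ^ (3 * k) *
            (qfact A (2*k) * ∏ j ∈ Finset.Ioc (2*k+1) (3*k+1), qint A j) *
              (qfact A k) ^ 3) by ring]
    rw [mul_div_mul_left _ _ hc]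
  -- assemble
  have hmain : Tendsto g (nhdsWithin ζ {A : ℂ | A ≠ 0 ∧ ∀ j : ℕ, 1 ≤ j → j ≤ 3 * k + 1 →
      A ^ (2 * j : ℤ) ≠ A ^ (-(2 * j : ℤ))}) (nhds 1) := by
    rw [← hgζ]
    exact hgt.mono_left nhdsWithin_le_nhds
  refine hmain.congr' ?_
  filter_upwards [self_mem_nhdsWithin] with A hA
  exact hEq A hA
end

section
/- Let m ≥ 1 be an integer, set N = 2m+1 and ζ = exp(πi/(2N)) ∈ ℂ, and for 0 ≤ j ≤ m set s(j) = ∏_{i=1}^{j} (sin(iπ/N)/sin(π/N)) (so s(0) = 1). Then the function A ↦ [ (([m]!_A)^{12} / ([2m]!_A)^6) · Σ_{z=3m}^{4m} (−1)^z · [z+1]!_A / ( ([4m−z]!_A)^3 · ([z−3m]!_A)^4 ) ] / [2m+1]_A tends, as A tends to ζ within the set {A ∈ ℂ : A ≠ 0 and A^(2j) ≠ A^(−2j) for every integer j with 1 ≤ j ≤ 4m+1}, to the real number Σ_{k=0}^{m} ( s(m) / (s(k)·s(m−k)) )^4 (regarded as a complex number). -/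
open Complex Filter

noncomputable def rint (N : ℕ) (j : ℕ) : ℝ :=
  Real.sin (j * Real.pi / N) / Real.sin (Real.pi / N)

noncomputable def rfact (N : ℕ) (j : ℕ) : ℝ := ∏ i ∈ Finset.Icc 1 j, rint N i

lemma sin_pos_of (N j : ℕ) (h1 : 1 ≤ j) (h2 : j < N) :
    0 < Real.sin (j * Real.pi / N) := by
  have hN : (0:ℝ) < N := by exact_mod_cast (by omega : 0 < N)
  apply Real.sin_pos_of_pos_of_lt_pi
  · have : (0:ℝ) < j := by exact_mod_cast h1
    positivity
  · rw [div_lt_iff₀ hN]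
    have : (j:ℝ) < N := by exact_mod_cast h2
    nlinarith [Real.pi_pos]

lemma rint_ne_zero (N j : ℕ) (h1 : 1 ≤ j) (h2 : j < N) (hN : 2 ≤ N) : rint N j ≠ 0 := by
  have h1' := sin_pos_of N j h1 h2
  have h2' := sin_pos_of N 1 le_rfl (by omega)
  simp only [Nat.cast_one, one_mul] at h2'
  exact div_ne_zero (ne_of_gt h1') (ne_of_gt h2')

lemma rfact_ne_zero (N j : ℕ) (h2 : j < N) (hN : 2 ≤ N) : rfact N j ≠ 0 := by
  rw [rfact]
  apply Finset.prod_ne_zero_iff.mpr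
  intro i hi
  simp only [Finset.mem_Icc] at hi
  exact rint_ne_zero N i hi.1 (by omega) hN

-- reflection: rint N (N - t) = rint N t for 1 ≤ t ≤ N-1
lemma rint_reflect (N t : ℕ) (hN : 1 ≤ N) (h2 : t ≤ N) : rint N (N - t) = rint N t := by
  unfold rint
  congr 1
  have h : ((N - t : ℕ) : ℝ) = (N : ℝ) - t := by push_cast [h2]; ring
  rw [h]
  have hN' : (N:ℝ) ≠ 0 := by exact_mod_cast Nat.pos_of_ne_zero (by omega) |>.ne'
  have : ((N:ℝ) - t) * Real.pi / N = Real.pi - t * Real.pi / N := by field_simp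
  rw [this, Real.sin_pi_sub]

lemma rint_shift (N t : ℕ) (hN : 1 ≤ N) : rint N (N + t) = - rint N t := by
  unfold rint
  have hN' : (N:ℝ) ≠ 0 := by exact_mod_cast Nat.pos_of_ne_zero (by omega) |>.ne'
  have : ((N + t : ℕ) : ℝ) * Real.pi / N = t * Real.pi / N + Real.pi := by
    push_cast; field_simp; ring
  rw [this, Real.sin_add_pi, neg_div]

lemma exp_sub_exp (x : ℂ) :
    Complex.exp (x * I) - Complex.exp (-(x * I)) = 2 * Complex.sin x * I := by
  rw [show -(x*I) = -x*I by ring, Complex.exp_mul_I, Complex.exp_mul_I,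
    Complex.cos_neg, Complex.sin_neg]
  ring

lemma qint_zeta (N j : ℕ) (hN : 1 ≤ N) :
    qint (Complex.exp (Real.pi * Complex.I / (2 * N))) j = (rint N j : ℂ) := by
  have hN' : (N:ℝ) ≠ 0 := by exact_mod_cast Nat.pos_of_ne_zero (by omega) |>.ne'
  have hNc : (N:ℂ) ≠ 0 := by exact_mod_cast hN'
  set c : ℝ := Real.pi / (2 * N) with hc
  have hz : (Real.pi : ℂ) * Complex.I / (2 * N) = (c : ℂ) * I := by
    rw [hc]; push_cast; field_simp
  rw [hz]
  have hpow : ∀ k : ℤ, Complex.exp ((c:ℂ) * I) ^ k = Complex.exp (((k * c : ℝ) : ℂ) * I) := by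
    intro k
    rw [← Complex.exp_int_mul]
    push_cast; ring_nf
  unfold qint
  rw [hpow, hpow, hpow, hpow]
  have harg : ∀ k : ℤ, ((-k * c : ℝ) : ℂ) * I = -(((k * c : ℝ) : ℂ) * I) := by
    intro k; push_cast; ring
  rw [show (-(2 * j : ℤ) : ℤ) = -(2*j : ℤ) from rfl]
  have h1 : (((-(2 * (j:ℤ)) : ℤ) * c : ℝ) : ℂ) * I = -((((2 * (j:ℤ) : ℤ) * c : ℝ) : ℂ) * I) := by
    push_cast; ring
  have h2 : (((-2 : ℤ) * c : ℝ) : ℂ) * I = -((((2 : ℤ) * c : ℝ) : ℂ) * I) := by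
    push_cast; ring
  rw [h1, h2, exp_sub_exp, exp_sub_exp]
  rw [← Complex.ofReal_sin, ← Complex.ofReal_sin]
  have h2I : (2 : ℂ) * I ≠ 0 := by simp [Complex.I_ne_zero]
  have e1 : ((2 * (j:ℤ) : ℤ) * c : ℝ) = j * Real.pi / N := by push_cast [hc]; field_simp
  have e2 : (((2 : ℤ)) * c : ℝ) = Real.pi / N := by push_cast [hc]; field_simp
  rw [e1, e2]
  have key : ∀ x y : ℂ, 2*x*I/(2*y*I) = x/y := fun x y => by
    rw [show 2*x*I = x*(2*I) by ring, show 2*y*I = y*(2*I) by ring,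
      mul_div_mul_right _ _ h2I]
  rw [key]
  unfold rint
  norm_cast

lemma qfact_zeta (N j : ℕ) (hN : 1 ≤ N) :
    qfact (Complex.exp (Real.pi * Complex.I / (2 * N))) j = (rfact N j : ℂ) := by
  unfold qfact rfact
  rw [Complex.ofReal_prod]
  exact Finset.prod_congr rfl fun i _ => qint_zeta N i hN

/-- complement: ∏_{j=m+k+1}^{2m} rint = rfact (m−k) -/
lemma prod_complement (m k : ℕ) (hk : k ≤ m) :
    ∏ j ∈ Finset.Icc (m + k + 1) (2 * m), rint (2*m+1) j = rfact (2*m+1) (m - k) := by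
  unfold rfact
  refine (Finset.prod_nbij' (fun t => 2*m+1-t) (fun t => 2*m+1-t) ?_ ?_ ?_ ?_ ?_).symm
  · intro a ha; simp only [Finset.mem_Icc] at *; omega
  · intro a ha; simp only [Finset.mem_Icc] at *; omega
  · intro a ha; simp only [Finset.mem_Icc] at ha; omega
  · intro a ha; simp only [Finset.mem_Icc] at ha; omega
  · intro a ha
    simp only [Finset.mem_Icc] at ha
    rw [rint_reflect (2*m+1) a (by omega) (by omega)]

lemma rfact_split (m k : ℕ) (hk : k ≤ m) :
    rfact (2*m+1) (m + k) * rfact (2*m+1) (m - k) = rfact (2*m+1) (2*m) := by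
  rw [← prod_complement m k hk]
  unfold rfact
  rw [← Finset.prod_union]
  · congr 1
    ext x; simp only [Finset.mem_union, Finset.mem_Icc]; omega
  · rw [Finset.disjoint_left]; intro x hx hx'
    simp only [Finset.mem_Icc] at *; omega

lemma rfact_two_mul (m : ℕ) : rfact (2*m+1) (2*m) = rfact (2*m+1) m ^ 2 := by
  have h := prod_complement m 0 (Nat.zero_le _)
  rw [Nat.sub_zero] at h
  unfold rfact at *
  rw [sq]
  nth_rewrite 2 [← h]
  rw [← Finset.prod_union]
  · congr 1
    ext x; simp only [Finset.mem_union, Finset.mem_Icc]; omega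
  · rw [Finset.disjoint_left]; intro x hx hx'
    simp only [Finset.mem_Icc] at *; omega

/-- shifted block: ∏_{j=2m+2}^{3m+k+1} rint = (−1)^(m+k) rfact (m+k) -/
lemma prod_shift_block (m k : ℕ) :
    ∏ j ∈ Finset.Icc (2*m + 2) (3*m + k + 1), rint (2*m+1) j
      = (-1 : ℝ) ^ (m + k) * rfact (2*m+1) (m + k) := by
  have h : ∏ j ∈ Finset.Icc (2*m + 2) (3*m + k + 1), rint (2*m+1) j
      = ∏ t ∈ Finset.Icc 1 (m + k), rint (2*m+1) (2*m+1 + t) := by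
    refine (Finset.prod_nbij' (fun t => 2*m+1+t) (fun t => t - (2*m+1)) ?_ ?_ ?_ ?_ ?_).symm
    · intro a ha; simp only [Finset.mem_Icc] at *; omega
    · intro a ha; simp only [Finset.mem_Icc] at *; omega
    · intro a ha; simp only [Finset.mem_Icc] at ha; omega
    · intro a ha; simp only [Finset.mem_Icc] at ha; omega
    · intro a _; rfl
  rw [h]
  have h2 : ∀ t ∈ Finset.Icc 1 (m+k), rint (2*m+1) (2*m+1 + t) = -1 * rint (2*m+1) t :=
    fun t _ => by rw [rint_shift (2*m+1) t (by omega)]; ring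
  rw [Finset.prod_congr rfl h2, Finset.prod_mul_distrib, Finset.prod_const]
  congr 1
  simp [Nat.card_Icc]

lemma erased_prod_val (m k : ℕ) (hm : 1 ≤ m) :
    ∏ j ∈ (Finset.Icc 1 (3*m + k + 1)).erase (2*m+1), rint (2*m+1) j
      = rfact (2*m+1) (2*m) * ((-1:ℝ)^(m+k) * rfact (2*m+1) (m+k)) := by
  have hset : (Finset.Icc 1 (3*m + k + 1)).erase (2*m+1)
      = Finset.Icc 1 (2*m) ∪ Finset.Icc (2*m+2) (3*m + k + 1) := by
    ext x; simp only [Finset.mem_erase, Finset.mem_Icc, Finset.mem_union]; omega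
  rw [hset, Finset.prod_union]
  · rw [prod_shift_block]; rfl
  · rw [Finset.disjoint_left]; intro x hx hx'
    simp only [Finset.mem_Icc] at *; omega

lemma term_val_real (m k : ℕ) (hm : 1 ≤ m) (hk : k ≤ m) :
    rfact (2*m+1) m ^ 12 / rfact (2*m+1) (2*m) ^ 6 *
      ((-1:ℝ)^(3*m+k) *
        (∏ j ∈ (Finset.Icc 1 (3*m + k + 1)).erase (2*m+1), rint (2*m+1) j) /
        (rfact (2*m+1) (m-k) ^ 3 * rfact (2*m+1) k ^ 4))
      = (rfact (2*m+1) m / (rfact (2*m+1) k * rfact (2*m+1) (m-k))) ^ 4 := by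
  rw [erased_prod_val m k hm]
  have hsign : (-1:ℝ)^(3*m+k) * (-1:ℝ)^(m+k) = 1 := by
    rw [← pow_add]
    exact Even.neg_one_pow ⟨2*m + k, by ring⟩
  have h2 : rfact (2*m+1) (2*m) = rfact (2*m+1) m ^ 2 := rfact_two_mul m
  have hsplit : rfact (2*m+1) (m+k) * rfact (2*m+1) (m-k) = rfact (2*m+1) m ^ 2 := by
    rw [rfact_split m k hk, h2]
  have hN : 2 ≤ 2*m+1 := by omega
  have ha : rfact (2*m+1) m ≠ 0 := rfact_ne_zero _ m (by omega) hN
  have hb : rfact (2*m+1) k ≠ 0 := rfact_ne_zero _ k (by omega) hN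
  have hc : rfact (2*m+1) (m-k) ≠ 0 := rfact_ne_zero _ (m-k) (by omega) hN
  set a := rfact (2*m+1) m
  set b := rfact (2*m+1) k
  set c := rfact (2*m+1) (m-k)
  set d := rfact (2*m+1) (m+k)
  rw [h2]
  calc a ^ 12 / (a^2) ^ 6 * ((-1:ℝ)^(3*m+k) * (a^2 * ((-1:ℝ)^(m+k) * d)) / (c ^ 3 * b ^ 4))
      = ((-1:ℝ)^(3*m+k) * (-1:ℝ)^(m+k)) * (a ^ 12 / (a^2) ^ 6 * (a^2 * d / (c ^ 3 * b ^ 4))) := by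
        ring
    _ = a ^ 12 / (a^2) ^ 6 * (a^2 * d / (c ^ 3 * b ^ 4)) := by rw [hsign, one_mul]
    _ = (a / (b * c)) ^ 4 := by
        field_simp
        linear_combination hsplit

lemma rint_one (N : ℕ) (hN : 2 ≤ N) : rint N 1 = 1 := by
  unfold rint
  rw [Nat.cast_one, one_mul]
  exact div_self (ne_of_gt (by simpa using sin_pos_of N 1 le_rfl (by omega)))


/-- For `N = 2m+1`, the Masbaum–Vogel six-j symbol with all edges colored `N`,
divided by `[N]_A`, tends as `A → exp(πi/(2N))` (within the set of nonzero `A`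
with `A^(2j) ≠ A^(−2j)` for `1 ≤ j ≤ 4m+1`) to
`sixj_N = Σ_{k=0}^{m} ( s(m)/(s(k)·s(m−k)) )^4` where
`s(j) = ∏_{i=1}^{j} sin(iπ/N)/sin(π/N)`. -/
theorem sixj_ratio_tendsto (m : ℕ) (hm : 1 ≤ m)
    (s : ℕ → ℝ)
    (hs : ∀ j : ℕ, j ≤ m →
      s j = ∏ i ∈ Finset.Icc 1 j,
        Real.sin (i * Real.pi / (2 * m + 1)) / Real.sin (Real.pi / (2 * m + 1))) :
    Tendsto
      (fun A : ℂ =>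
        ((qfact A m) ^ 12 / (qfact A (2 * m)) ^ 6 *
            ∑ z ∈ Finset.Icc (3 * m) (4 * m),
              (-1 : ℂ) ^ z * qfact A (z + 1) /
                ((qfact A (4 * m - z)) ^ 3 * (qfact A (z - 3 * m)) ^ 4)) /
          qint A (2 * m + 1))
      (nhdsWithin (Complex.exp (Real.pi * Complex.I / (2 * (2 * m + 1))))
        {A : ℂ | A ≠ 0 ∧ ∀ j : ℕ, 1 ≤ j → j ≤ 4 * m + 1 →
          A ^ (2 * j : ℤ) ≠ A ^ (-(2 * j : ℤ))})
      (nhds ((↑(∑ k ∈ Finset.range (m + 1), (s m / (s k * s (m - k))) ^ 4) : ℂ))) := by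
  have hN : 1 ≤ 2 * m + 1 := by omega
  set N : ℕ := 2 * m + 1 with hNdef
  set ζ : ℂ := Complex.exp (Real.pi * Complex.I / (2 * (N : ℂ))) with hζ
  have hpt : Complex.exp (Real.pi * Complex.I / (2 * (2 * (m:ℂ) + 1))) = ζ := by
    rw [hζ]; push_cast [hNdef]; ring_nf
  set S : Set ℂ := {A : ℂ | A ≠ 0 ∧ ∀ j : ℕ, 1 ≤ j → j ≤ 4 * m + 1 →
      A ^ (2 * j : ℤ) ≠ A ^ (-(2 * j : ℤ))} with hS
  rw [hpt]
  set l := nhdsWithin ζ S with hl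
  -- basic facts about ζ
  have hz0 : ζ ≠ 0 := Complex.exp_ne_zero _
  have hq1 : qint ζ 1 = 1 := by
    rw [hζ, qint_zeta N 1 hN, rint_one N (by omega)]; norm_num
  have hden : ζ ^ (2:ℤ) - ζ ^ (-2:ℤ) ≠ 0 := by
    intro h
    have h0 : qint ζ 1 = 0 := by unfold qint; rw [h, div_zero]
    exact one_ne_zero (hq1.symm.trans h0)
  -- limits of building blocks
  have tq : ∀ j : ℕ, Tendsto (fun A => qint A j) l (nhds ((rint N j : ℝ) : ℂ)) := by
    intro j
    have hc : ContinuousAt (fun A => qint A j) ζ := by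
      unfold qint
      exact ((continuousAt_zpow₀ ζ _ (Or.inl hz0)).sub
          (continuousAt_zpow₀ ζ _ (Or.inl hz0))).div
        ((continuousAt_zpow₀ ζ _ (Or.inl hz0)).sub
          (continuousAt_zpow₀ ζ _ (Or.inl hz0))) hden
    have := hc.continuousWithinAt (s := S)
    rw [ContinuousWithinAt] at this
    rwa [show qint ζ j = ((rint N j : ℝ) : ℂ) from by rw [hζ]; exact qint_zeta N j hN] at this
  have tqf : ∀ j : ℕ, Tendsto (fun A => qfact A j) l (nhds ((rfact N j : ℝ) : ℂ)) := by
    intro j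
    unfold qfact rfact
    rw [Complex.ofReal_prod]
    exact tendsto_finset_prod _ (fun i _ => tq i)
  have tP : ∀ z : ℕ, Tendsto (fun A => ∏ j ∈ (Finset.Icc 1 (z+1)).erase N, qint A j) l
      (nhds ((∏ j ∈ (Finset.Icc 1 (z+1)).erase N, rint N j : ℝ) : ℂ)) := by
    intro z
    rw [Complex.ofReal_prod]
    exact tendsto_finset_prod _ (fun i _ => tq i)
  have hrf : ∀ j : ℕ, j ≤ 2 * m → ((rfact N j : ℝ) : ℂ) ≠ 0 := by
    intro j hj
    exact_mod_cast rfact_ne_zero N j (by omega) (by omega)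
  -- the regularized function G
  set G : ℂ → ℂ := fun A =>
    (qfact A m) ^ 12 / (qfact A (2 * m)) ^ 6 *
      ∑ z ∈ Finset.Icc (3 * m) (4 * m),
        (-1 : ℂ) ^ z * (∏ j ∈ (Finset.Icc 1 (z+1)).erase N, qint A j) /
          ((qfact A (4 * m - z)) ^ 3 * (qfact A (z - 3 * m)) ^ 4) with hG
  -- F = G on S
  have hFG : ∀ A ∈ S, ((qfact A m) ^ 12 / (qfact A (2 * m)) ^ 6 *
            ∑ z ∈ Finset.Icc (3 * m) (4 * m),
              (-1 : ℂ) ^ z * qfact A (z + 1) /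
                ((qfact A (4 * m - z)) ^ 3 * (qfact A (z - 3 * m)) ^ 4)) /
          qint A N = G A := by
    intro A hA
    obtain ⟨hA0, hA2⟩ := hA
    have hnum : A ^ (2 * (N:ℤ)) - A ^ (-(2 * (N:ℤ))) ≠ 0 :=
      sub_ne_zero.mpr (by exact_mod_cast hA2 N (by omega) (by omega))
    have hden' : A ^ (2:ℤ) - A ^ (-2:ℤ) ≠ 0 := by
      have := hA2 1 le_rfl (by omega)
      rw [show (2 * (1:ℕ) : ℤ) = 2 by norm_num] at this
      exact sub_ne_zero.mpr this
    have hq : qint A N ≠ 0 := by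
      unfold qint
      push_cast
      exact div_ne_zero (by push_cast at hnum; exact hnum) hden'
    have hterm : ∀ z ∈ Finset.Icc (3*m) (4*m),
        (-1 : ℂ) ^ z * qfact A (z + 1) /
            ((qfact A (4 * m - z)) ^ 3 * (qfact A (z - 3 * m)) ^ 4)
          = qint A N * ((-1 : ℂ) ^ z * (∏ j ∈ (Finset.Icc 1 (z+1)).erase N, qint A j) /
            ((qfact A (4 * m - z)) ^ 3 * (qfact A (z - 3 * m)) ^ 4)) := by
      intro z hz
      simp only [Finset.mem_Icc] at hz
      have hmem : N ∈ Finset.Icc 1 (z+1) := by simp only [Finset.mem_Icc]; omega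
      rw [show qfact A (z+1) = qint A N * ∏ j ∈ (Finset.Icc 1 (z+1)).erase N, qint A j from
        (Finset.mul_prod_erase _ _ hmem).symm]
      ring
    rw [Finset.sum_congr rfl hterm, ← Finset.mul_sum, hG]
    rw [mul_comm (qint A N), ← mul_assoc, mul_div_assoc, div_self hq, mul_one]
  -- limit of G
  have tG : Tendsto G l (nhds (((rfact N m : ℝ):ℂ) ^ 12 / ((rfact N (2*m) : ℝ):ℂ) ^ 6 *
      ∑ z ∈ Finset.Icc (3 * m) (4 * m),
        (-1 : ℂ) ^ z * ((∏ j ∈ (Finset.Icc 1 (z+1)).erase N, rint N j : ℝ) : ℂ) /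
          (((rfact N (4 * m - z) : ℝ):ℂ) ^ 3 * ((rfact N (z - 3 * m) : ℝ):ℂ) ^ 4))) := by
    refine Tendsto.mul (Tendsto.div ((tqf m).pow 12) ((tqf (2*m)).pow 6)
      (pow_ne_zero _ (hrf (2*m) le_rfl))) (tendsto_finset_sum _ fun z hz => ?_)
    simp only [Finset.mem_Icc] at hz
    exact Tendsto.div (tendsto_const_nhds.mul (tP z))
      (((tqf (4*m - z)).pow 3).mul ((tqf (z - 3*m)).pow 4))
      (mul_ne_zero (pow_ne_zero _ (hrf _ (by omega))) (pow_ne_zero _ (hrf _ (by omega))))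
  -- compute the limit value
  have hs' : ∀ j : ℕ, j ≤ m → s j = rfact N j := by
    intro j hj
    rw [hs j hj, rfact]
    exact Finset.prod_congr rfl fun i _ => by unfold rint; push_cast [hNdef]; ring_nf
  have hval : ((rfact N m : ℝ):ℂ) ^ 12 / ((rfact N (2*m) : ℝ):ℂ) ^ 6 *
      ∑ z ∈ Finset.Icc (3 * m) (4 * m),
        (-1 : ℂ) ^ z * ((∏ j ∈ (Finset.Icc 1 (z+1)).erase N, rint N j : ℝ) : ℂ) /
          (((rfact N (4 * m - z) : ℝ):ℂ) ^ 3 * ((rfact N (z - 3 * m) : ℝ):ℂ) ^ 4)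
      = ((∑ k ∈ Finset.range (m + 1), (s m / (s k * s (m - k))) ^ 4 : ℝ) : ℂ) := by
    rw [Finset.mul_sum, Complex.ofReal_sum]
    refine Finset.sum_nbij' (fun z => z - 3*m) (fun k => 3*m + k) ?_ ?_ ?_ ?_ ?_
    · intro a ha; simp only [Finset.mem_Icc, Finset.mem_range] at *; omega
    · intro a ha; simp only [Finset.mem_Icc, Finset.mem_range] at *; omega
    · intro a ha; simp only [Finset.mem_Icc] at ha; omega
    · intro a ha; simp only [Finset.mem_range] at ha; omega
    · intro z hz
      simp only [Finset.mem_Icc] at hz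
      obtain ⟨k, rfl⟩ : ∃ k, z = 3*m + k := ⟨z - 3*m, by omega⟩
      have hk : k ≤ m := by omega
      have e1 : 4*m - (3*m + k) = m - k := by omega
      have e2 : 3*m + k - 3*m = k := by omega
      rw [e1, e2]
      rw [hs' m le_rfl, hs' k hk, hs' (m-k) (by omega)]
      have := term_val_real m k hm hk
      rw [hNdef]
      exact_mod_cast this
  rw [← hval]
  refine tG.congr' ?_
  exact (Filter.eventuallyEq_of_mem self_mem_nhdsWithin hFG).symm
end

section
/- Work in the ring ℤ[A, A^{−1}] of Laurent polynomials over ℤ in one variable A. For an integer j ≥ 1 define the quantum integer [j] = Σ_{i=0}^{j−1} A^{2j−2−4i}, and define the quantum factorial [j]! = ∏_{i=1}^{j} [i]. Then for every integer k ≥ 2, the element ([2k]!)^3 · [2k+1] does not divide the element [3k+1]! · ([k]!)^3 in ℤ[A, A^{−1}]. -/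
open LaurentPolynomial

/-- The quantum integer `[j] = Σ_{i=0}^{j−1} A^(2j−2−4i)` in `ℤ[A, A⁻¹]`. -/
noncomputable def qintL (j : ℕ) : LaurentPolynomial ℤ :=
  ∑ i ∈ Finset.range j, LaurentPolynomial.T (2 * (j : ℤ) - 2 - 4 * (i : ℤ))

/-- The quantum factorial `[j]! = ∏_{i=1}^{j} [i]` in `ℤ[A, A⁻¹]`. -/
noncomputable def qfactL (j : ℕ) : LaurentPolynomial ℤ :=
  ∏ i ∈ Finset.Icc 1 j, qintL i

section aux
open Polynomial

/-- Polynomial representative of the quantum integer. -/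
noncomputable def pZ (j : ℕ) : Polynomial ℤ := ∑ i ∈ Finset.range j, Polynomial.X ^ (4 * i)

/-- Polynomial representative of the quantum factorial. -/
noncomputable def PZ (n : ℕ) : Polynomial ℤ := ∏ i ∈ Finset.Icc 1 n, pZ i

lemma T_sum {s : Finset ℕ} (e : ℕ → ℤ) :
    (T (∑ i ∈ s, e i) : LaurentPolynomial ℤ) = ∏ i ∈ s, T (e i) := by
  classical
  induction s using Finset.induction with
  | empty => simp
  | insert _ _ h ih => rw [Finset.sum_insert h, Finset.prod_insert h, T_add, ih]

lemma toLaurent_pZ (j : ℕ) :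
    Polynomial.toLaurent (pZ j) = qintL j * T (2 * (j : ℤ) - 2) := by
  unfold pZ qintL
  rw [map_sum, Finset.sum_mul]
  conv_rhs => rw [← Finset.sum_range_reflect]
  refine Finset.sum_congr rfl fun i hi => ?_
  rw [Finset.mem_range] at hi
  rw [Polynomial.toLaurent_X_pow, ← T_add]
  congr 1
  omega

lemma toLaurent_PZ (n : ℕ) :
    Polynomial.toLaurent (PZ n) = qfactL n * T (∑ i ∈ Finset.Icc 1 n, (2 * (i : ℤ) - 2)) := by
  unfold PZ qfactL
  rw [map_prod, T_sum, ← Finset.prod_mul_distrib]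
  exact Finset.prod_congr rfl fun i _ => toLaurent_pZ i

lemma dvd_transfer {f g : LaurentPolynomial ℤ} {P Q : Polynomial ℤ} {a b : ℤ}
    (hf : Polynomial.toLaurent P = f * T a) (hg : Polynomial.toLaurent Q = g * T b)
    (h : f ∣ g) : ∃ n : ℕ, P ∣ Q * Polynomial.X ^ n := by
  obtain ⟨h', rfl⟩ := h
  obtain ⟨m, H, hH⟩ := h'.exists_T_pow
  set N : ℤ := (-(a + m)) ⊔ (-b) ⊔ 0 with hN
  have h1 : -(a + m) ≤ N := le_sup_of_le_left le_sup_left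
  have h2 : -b ≤ N := le_sup_of_le_left le_sup_right
  have hN1 : 0 ≤ b + N := by omega
  have hN2 : 0 ≤ a + m + N := by omega
  have key : Polynomial.toLaurent (Q * Polynomial.X ^ (a + m + N).toNat) =
      Polynomial.toLaurent (P * H * Polynomial.X ^ (b + N).toNat) := by
    rw [map_mul, map_mul, map_mul, Polynomial.toLaurent_X_pow, Polynomial.toLaurent_X_pow,
      Int.toNat_of_nonneg hN2, Int.toNat_of_nonneg hN1, hg, hf, hH]
    rw [show (a + m + N : ℤ) = a + m + N from rfl]
    rw [show (T (a + m + N) : LaurentPolynomial ℤ) = T a * T (m : ℤ) * T N by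
      rw [← T_add, ← T_add],
      show (T (b + N) : LaurentPolynomial ℤ) = T b * T N by rw [← T_add]]
    ring
  have hinj := Polynomial.toLaurent_injective key
  exact ⟨(a + m + N).toNat, H * Polynomial.X ^ (b + N).toNat, by rw [hinj]; ring⟩

/-- Complex version of `pZ`. -/
noncomputable def pC (j : ℕ) : Polynomial ℂ := ∑ i ∈ Finset.range j, Polynomial.X ^ (4 * i)

noncomputable def PC (n : ℕ) : Polynomial ℂ := ∏ i ∈ Finset.Icc 1 n, pC i

lemma map_pZ (j : ℕ) : (pZ j).map (Int.castRingHom ℂ) = pC j := by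
  simp [pZ, pC, Polynomial.map_sum]

lemma map_PZ (n : ℕ) : (PZ n).map (Int.castRingHom ℂ) = PC n := by
  simp [PZ, PC, Polynomial.map_prod, map_pZ]

lemma pC_mul (j : ℕ) : pC j * (X ^ 4 - 1) = X ^ (4 * j) - 1 := by
  simp only [pC, pow_mul]
  rw [geom_sum_mul]

end aux

/-- For every `k ≥ 2`, `([2k]!)^3·[2k+1]` does not divide `[3k+1]!·([k]!)^3`
in the ring of Laurent polynomials `ℤ[A, A⁻¹]`: the normalized colored Jones
invariant of the theta graph is not a Laurent polynomial for odd `N = 2k+1 > 3`. -/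
theorem theta_not_laurent (k : ℕ) (hk : 2 ≤ k) :
    ¬ ((qfactL (2 * k)) ^ 3 * qintL (2 * k + 1) ∣ qfactL (3 * k + 1) * (qfactL k) ^ 3) := by
  intro hdvd
  classical
  -- Laurent-to-polynomial representatives
  have hden : Polynomial.toLaurent (PZ (2*k) ^ 3 * pZ (2*k+1)) =
      (qfactL (2*k)) ^ 3 * qintL (2*k+1) *
        T (((3:ℕ):ℤ) * (∑ i ∈ Finset.Icc 1 (2*k), (2*(i:ℤ)-2)) + (2*((2*k+1:ℕ):ℤ)-2)) := by
    rw [map_mul, map_pow, toLaurent_PZ, toLaurent_pZ, mul_pow, T_pow,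
      mul_mul_mul_comm, ← T_add]
  have hnum : Polynomial.toLaurent (PZ (3*k+1) * PZ k ^ 3) =
      qfactL (3*k+1) * (qfactL k) ^ 3 *
        T ((∑ i ∈ Finset.Icc 1 (3*k+1), (2*(i:ℤ)-2)) +
          ((3:ℕ):ℤ) * (∑ i ∈ Finset.Icc 1 k, (2*(i:ℤ)-2))) := by
    rw [map_mul, map_pow, toLaurent_PZ, toLaurent_PZ, mul_pow, T_pow,
      mul_mul_mul_comm, ← T_add]
  obtain ⟨n, hPQ⟩ := dvd_transfer hden hnum hdvd
  -- map to ℂ[X]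
  have hC : (PC (2*k) ^ 3 * pC (2*k+1)) ∣ (PC (3*k+1) * PC k ^ 3) * Polynomial.X ^ n := by
    have := Polynomial.map_dvd (Int.castRingHom ℂ) hPQ
    simpa [Polynomial.map_mul, Polynomial.map_pow, map_PZ, map_pZ] using this
  -- the primitive 8k-th root of unity
  have hm0 : 8 * k ≠ 0 := by omega
  obtain ⟨ζ, hζ⟩ : ∃ ζ : ℂ, IsPrimitiveRoot ζ (8 * k) :=
    ⟨_, Complex.isPrimitiveRoot_exp (8 * k) hm0⟩
  have hζ0 : ζ ≠ 0 := hζ.ne_zero hm0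
  have h4 : (ζ ^ 4 - 1) ≠ 0 :=
    sub_ne_zero.mpr (hζ.pow_ne_one_of_pos_of_lt (by norm_num) (by omega))
  have hev : ∀ j : ℕ, Polynomial.eval ζ (pC j) * (ζ ^ 4 - 1) = ζ ^ (4 * j) - 1 := by
    intro j
    have := congrArg (Polynomial.eval ζ) (pC_mul j)
    simpa using this
  have hroot : Polynomial.eval ζ (pC (2*k)) = 0 := by
    have h8 : ζ ^ (4 * (2*k)) = 1 := by
      rw [show 4 * (2*k) = 8 * k by ring]
      exact hζ.pow_eq_one
    have h := hev (2*k)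
    rw [h8, sub_self] at h
    exact (mul_eq_zero.mp h).resolve_right h4
  have hne : ∀ j : ℕ, ¬ (2*k ∣ j) → Polynomial.eval ζ (pC j) ≠ 0 := by
    intro j hj h0
    have h := hev j
    rw [h0, zero_mul] at h
    have h1 : ζ ^ (4*j) = 1 := by
      have := h.symm
      rwa [sub_eq_zero] at this
    obtain ⟨t, ht⟩ := (hζ.pow_eq_one_iff_dvd (4*j)).mp h1
    refine hj ⟨t, ?_⟩
    have h2 : 4 * j = 4 * (2 * k * t) := by rw [ht]; ring
    exact Nat.eq_of_mul_eq_mul_left (by norm_num) h2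
  -- nonvanishing of the other factors
  have hne1 : ∀ j ∈ (Finset.Icc 1 (3*k+1)).erase (2*k), Polynomial.eval ζ (pC j) ≠ 0 := by
    intro j hj
    rw [Finset.mem_erase, Finset.mem_Icc] at hj
    refine hne j ?_
    intro hdvd2
    have h2k : 2*k ≤ j := Nat.le_of_dvd (by omega) hdvd2
    obtain ⟨t, rfl⟩ := hdvd2
    have ht2 : t < 2 := by
      refine Nat.lt_of_mul_lt_mul_left (a := 2*k) ?_
      calc 2*k*t ≤ 3*k+1 := hj.2.2
        _ < 2*k*2 := by omega
    have ht1 : 1 ≤ t := by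
      rcases Nat.eq_zero_or_pos t with rfl | h
      · simp at hj
      · exact h
    have : t = 1 := by omega
    subst this
    simp at hj
  have hne2 : ∀ j ∈ Finset.Icc 1 k, Polynomial.eval ζ (pC j) ≠ 0 := by
    intro j hj
    rw [Finset.mem_Icc] at hj
    refine hne j ?_
    intro hdvd2
    have := Nat.le_of_dvd (by omega) hdvd2
    omega
  -- split the numerator
  have hmem : 2*k ∈ Finset.Icc 1 (3*k+1) := by
    rw [Finset.mem_Icc]; omega
  set R := (∏ i ∈ (Finset.Icc 1 (3*k+1)).erase (2*k), pC i) * PC k ^ 3 with hR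
  have hsplit : PC (3*k+1) * PC k ^ 3 = pC (2*k) * R := by
    rw [hR, PC, ← Finset.mul_prod_erase _ _ hmem]
    ring
  have hRne : Polynomial.eval ζ R ≠ 0 := by
    rw [hR]
    simp only [Polynomial.eval_mul, Polynomial.eval_pow, Polynomial.eval_prod, PC]
    exact mul_ne_zero (Finset.prod_ne_zero_iff.mpr hne1)
      (pow_ne_zero _ (Finset.prod_ne_zero_iff.mpr hne2))
  -- (X - ζ)^2 divides the denominator polynomial
  have hdd : (Polynomial.X - Polynomial.C ζ) ∣ pC (2*k) :=
    Polynomial.dvd_iff_isRoot.mpr hroot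
  have hP2 : (Polynomial.X - Polynomial.C ζ)^2 ∣ PC (2*k) ^ 3 * pC (2*k+1) := by
    have h1 : pC (2*k) ∣ PC (2*k) :=
      Finset.dvd_prod_of_mem _ (by rw [Finset.mem_Icc]; omega)
    calc (Polynomial.X - Polynomial.C ζ)^2 ∣ (pC (2*k))^2 := pow_dvd_pow_of_dvd hdd 2
      _ ∣ (PC (2*k))^2 := pow_dvd_pow_of_dvd h1 2
      _ ∣ (PC (2*k))^3 := pow_dvd_pow _ (by norm_num)
      _ ∣ PC (2*k) ^ 3 * pC (2*k+1) := dvd_mul_right _ _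
  -- coprimality with X^n
  have hcop : IsCoprime (Polynomial.X - Polynomial.C ζ) (Polynomial.X : Polynomial ℂ) := by
    refine ⟨-Polynomial.C ζ⁻¹, Polynomial.C ζ⁻¹, ?_⟩
    have hone : Polynomial.C ζ⁻¹ * Polynomial.C ζ = 1 := by
      rw [← Polynomial.C_mul, inv_mul_cancel₀ hζ0, Polynomial.C_1]
    linear_combination hone
  have hQ2 : (Polynomial.X - Polynomial.C ζ)^2 ∣ pC (2*k) * R := by
    refine (hcop.pow (n := n)).dvd_of_dvd_mul_right ?_
    rw [← hsplit]
    exact hP2.trans hC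
  -- conclude a contradiction with squarefreeness of X^(8k) - 1
  obtain ⟨s, hs⟩ := hdd
  have hXζ : (Polynomial.X - Polynomial.C ζ) ≠ 0 := Polynomial.X_sub_C_ne_zero ζ
  have hsR : (Polynomial.X - Polynomial.C ζ) ∣ s * R := by
    have h2 := hQ2
    rw [hs, pow_two, mul_assoc] at h2
    exact (mul_dvd_mul_iff_left hXζ).mp h2
  have hsζ : Polynomial.eval ζ s = 0 := by
    have h3 := Polynomial.dvd_iff_isRoot.mp hsR
    rw [Polynomial.IsRoot, Polynomial.eval_mul] at h3
    exact (mul_eq_zero.mp h3).resolve_right hRne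
  have hdds : (Polynomial.X - Polynomial.C ζ) ∣ s := Polynomial.dvd_iff_isRoot.mpr hsζ
  obtain ⟨u, hu⟩ := hdds
  have hsq : (Polynomial.X - Polynomial.C ζ) * (Polynomial.X - Polynomial.C ζ) ∣
      (Polynomial.X ^ (4*(2*k)) - 1 : Polynomial ℂ) := by
    refine Dvd.dvd.trans ?_ ⟨Polynomial.X^4 - 1, (pC_mul (2*k)).symm⟩
    exact ⟨u, by rw [hs, hu]; ring⟩
  have hsf : Squarefree (Polynomial.X ^ (4*(2*k)) - 1 : Polynomial ℂ) := by
    refine Polynomial.Separable.squarefree ?_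
    refine Polynomial.X_pow_sub_one_separable_iff.mpr ?_
    exact_mod_cast Nat.cast_ne_zero.mpr (show 4*(2*k) ≠ 0 by omega)
  exact Polynomial.not_isUnit_X_sub_C ζ (hsf _ hsq)
end

section
/- For an odd integer N = 2m+1 ≥ 3 define s_N(j) = ∏_{i=1}^{j} (sin(iπ/N)/sin(π/N)) for 0 ≤ j ≤ m, and define sixj_N = Σ_{k=0}^{m} ( s_N(m)/(s_N(k)·s_N(m−k)) )^4, a positive real number. Then the sequence n ↦ (2π/(2n+1)) · log( sixj_{2n+1} ) converges, as n → ∞, to −16·∫_{0}^{π/4} log(2 sin u) du. -/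
open Real Filter

/-- For odd `N = 2m+1`, `s_N(j) = ∏_{i=1}^{j} sin(iπ/N)/sin(π/N)`. -/
noncomputable def sN (m j : ℕ) : ℝ :=
  ∏ i ∈ Finset.Icc 1 j,
    Real.sin (i * Real.pi / (2 * m + 1)) / Real.sin (Real.pi / (2 * m + 1))

/-- For odd `N = 2m+1`, `sixj_N = Σ_{k=0}^{m} ( s_N(m)/(s_N(k)·s_N(m−k)) )^4`. -/
noncomputable def sixjN (m : ℕ) : ℝ :=
  ∑ k ∈ Finset.range (m + 1), (sN m m / (sN m k * sN m (m - k))) ^ 4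

namespace SixJ

open MeasureTheory Set

noncomputable def g (u : ℝ) : ℝ := Real.log (2 * Real.sin u)

lemma g_mono {u v : ℝ} (h0 : 0 < u) (huv : u ≤ v) (hv : v ≤ π / 2) : g u ≤ g v := by
  have hπ := Real.pi_pos
  have hsu : 0 < Real.sin u := Real.sin_pos_of_pos_of_lt_pi h0 (by linarith)
  apply Real.log_le_log (by linarith)
  have := Real.sin_le_sin_of_le_of_le_pi_div_two (by linarith : -(π/2) ≤ u) hv huv
  linarith

lemma u_le_two_sin {u : ℝ} (h0 : 0 ≤ u) (h : u ≤ π / 2) : u ≤ 2 * Real.sin u := by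
  have h1 := Real.mul_le_sin h0 h
  have h2 := Real.pi_le_four
  have h3 := Real.pi_pos
  have hs : 0 ≤ Real.sin u := Real.sin_nonneg_of_nonneg_of_le_pi h0 (by linarith)
  rw [div_mul_eq_mul_div, div_le_iff₀ h3] at h1
  nlinarith

lemma g_integrableOn : IntegrableOn g (Ioc 0 (π/2)) volume := by
  have meas : AEStronglyMeasurable g (volume.restrict (Ioc 0 (π/2))) :=
    (Real.measurable_log.comp (measurable_const.mul Real.measurable_sin)).aestronglyMeasurable
  have hmaj : IntegrableOn (fun u : ℝ => 2 * u ^ (-(1:ℝ)/2) + Real.log 2) (Ioc 0 (π/2)) volume := by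
    apply Integrable.add
    · have h1 : IntegrableOn (fun u : ℝ => u ^ (-(1:ℝ)/2)) (Ioo 0 (π/2)) volume :=
        (intervalIntegral.integrableOn_Ioo_rpow_iff (by positivity)).2 (by norm_num)
      have h2 : IntegrableOn (fun u : ℝ => 2 * u ^ (-(1:ℝ)/2)) (Ioo 0 (π/2)) volume :=
        h1.const_mul 2
      exact (integrableOn_Ioc_iff_integrableOn_Ioo).mpr h2
    · exact integrableOn_const measure_Ioc_lt_top.ne
  refine Integrable.mono' hmaj meas ?_
  filter_upwards [ae_restrict_mem measurableSet_Ioc] with u hu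
  obtain ⟨hu0, hu2⟩ := hu
  have hπ := Real.pi_pos
  have hs : 0 < Real.sin u := Real.sin_pos_of_pos_of_lt_pi hu0 (by linarith)
  have hle2 : 2 * Real.sin u ≤ 2 := by nlinarith [Real.sin_le_one u]
  have hgeu : u ≤ 2 * Real.sin u := u_le_two_sin hu0.le hu2
  have ht : (0:ℝ) < u ^ (-(1:ℝ)/2) := Real.rpow_pos_of_pos hu0 _
  have hlogt : Real.log (u ^ (-(1:ℝ)/2)) = (-(1:ℝ)/2) * Real.log u := Real.log_rpow hu0 _
  have hkey : -Real.log u ≤ 2 * u ^ (-(1:ℝ)/2) := by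
    have := Real.log_le_sub_one_of_pos ht
    rw [hlogt] at this
    linarith
  have hg_ub : g u ≤ Real.log 2 := by
    unfold g
    exact Real.log_le_log (by linarith) hle2
  have hg_lb : Real.log u ≤ g u := Real.log_le_log hu0 hgeu
  have hlog2 : (0:ℝ) ≤ Real.log 2 := Real.log_nonneg one_le_two
  rw [Real.norm_eq_abs, abs_le]
  constructor
  · linarith
  · linarith

lemma g_intervalIntegrable {a b : ℝ} (ha : a ∈ Icc (0:ℝ) (π/2)) (hb : b ∈ Icc (0:ℝ) (π/2)) :
    IntervalIntegrable g volume a b := by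
  have h0 : IntervalIntegrable g volume 0 (π/2) := by
    rw [intervalIntegrable_iff_integrableOn_Ioc_of_le (by positivity)]
    exact g_integrableOn
  apply h0.mono_set
  apply Set.uIcc_subset_uIcc <;> rw [Set.uIcc_of_le (by positivity : (0:ℝ) ≤ π/2)]
  · exact ha
  · exact hb

noncomputable def F (x : ℝ) : ℝ := ∫ u in (0:ℝ)..x, g u

lemma F_contOn : ContinuousOn F (Icc 0 (π/2)) := by
  have h : IntegrableOn g (uIcc 0 (π/2)) volume := by
    rw [Set.uIcc_of_le (by positivity), integrableOn_Icc_iff_integrableOn_Ioc]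
    exact g_integrableOn
  have := intervalIntegral.continuousOn_primitive_interval h
  rwa [Set.uIcc_of_le (by positivity)] at this

lemma integral_le_const {a b : ℝ} (h0 : 0 ≤ a) (hab : a ≤ b) (hb : b ≤ π/2) :
    ∫ u in a..b, g u ≤ (b - a) * g b := by
  have hInt : IntegrableOn g (Ioc a b) volume :=
    (g_intervalIntegrable ⟨h0, hab.trans hb⟩ ⟨h0.trans hab, hb⟩).1
  rw [intervalIntegral.integral_of_le hab]
  calc ∫ u in Ioc a b, g u ≤ ∫ _u in Ioc a b, g b := by
        apply setIntegral_mono_on hInt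
          (integrableOn_const measure_Ioc_lt_top.ne) measurableSet_Ioc
        intro x hx
        exact g_mono (h0.trans_lt hx.1) hx.2 hb
    _ = (b - a) * g b := by
        rw [setIntegral_const, Real.volume_real_Ioc, max_eq_left (by linarith)]
        simp [smul_eq_mul]

lemma const_le_integral {a b : ℝ} (h0 : 0 < a) (hab : a ≤ b) (hb : b ≤ π/2) :
    (b - a) * g a ≤ ∫ u in a..b, g u := by
  have hInt : IntegrableOn g (Ioc a b) volume :=
    (g_intervalIntegrable ⟨h0.le, hab.trans hb⟩ ⟨h0.le.trans hab, hb⟩).1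
  rw [intervalIntegral.integral_of_le hab]
  calc ((b - a)) * g a = ∫ _u in Ioc a b, g a := by
        rw [setIntegral_const, Real.volume_real_Ioc, max_eq_left (by linarith)]
        simp [smul_eq_mul]
    _ ≤ ∫ u in Ioc a b, g u := by
        apply setIntegral_mono_on
          (integrableOn_const measure_Ioc_lt_top.ne) hInt measurableSet_Ioc
        intro x hx
        exact g_mono h0 hx.1.le (hx.2.trans hb)

noncomputable def θ (m : ℕ) : ℝ := π / (2 * m + 1)
noncomputable def L (m j : ℕ) : ℝ := ∑ i ∈ Finset.Icc 1 j, g (i * θ m)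

lemma θ_pos (m : ℕ) : 0 < θ m := by
  have := Real.pi_pos
  unfold θ; positivity

lemma mul_θ_le {m j : ℕ} (hj : j ≤ m) : (j : ℝ) * θ m ≤ π / 2 := by
  have hp := Real.pi_pos
  unfold θ
  rw [← mul_div_assoc, div_le_div_iff₀ (by positivity) (by norm_num : (0:ℝ) < 2)]
  have : (j:ℝ) ≤ m := by exact_mod_cast hj
  nlinarith

lemma F_add {m : ℕ} {x y : ℝ} (hx : x ∈ Icc (0:ℝ) (π/2)) (hy : y ∈ Icc (0:ℝ) (π/2)) :
    F y = F x + ∫ u in x..y, g u := by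
  unfold F
  rw [intervalIntegral.integral_add_adjacent_intervals
    (g_intervalIntegrable (⟨le_refl _, by positivity⟩) hx) (g_intervalIntegrable hx hy)]

lemma L_lower {m j : ℕ} (hj : j ≤ m) : F ((j:ℝ) * θ m) ≤ θ m * L m j := by
  induction j with
  | zero => simp [L, F, θ]
  | succ j ih =>
    have hj' : j ≤ m := Nat.le_of_succ_le hj
    have hθ := θ_pos m
    have h1 : ((j:ℝ)+1) * θ m ≤ π/2 := by
      have := mul_θ_le (m := m) hj; push_cast at this ⊢; linarith
    have h0 : (0:ℝ) ≤ (j:ℝ) * θ m := by positivity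
    have hFadd : F (((j:ℕ)+1 : ℕ) * θ m)
        = F ((j:ℝ) * θ m) + ∫ u in ((j:ℝ) * θ m)..(((j:ℕ)+1 : ℕ) * θ m), g u := by
      apply F_add (m := m) ⟨h0, le_trans (by push_cast; nlinarith) h1⟩ ?_
      constructor
      · push_cast; positivity
      · push_cast; exact h1
    have hint : ∫ u in ((j:ℝ) * θ m)..(((j:ℕ)+1:ℕ) * θ m), g u
        ≤ θ m * g (((j:ℕ)+1:ℕ) * θ m) := by
      have := integral_le_const (a := (j:ℝ) * θ m) (b := (((j:ℕ)+1:ℕ):ℝ) * θ m) h0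
        (by push_cast; nlinarith) (by push_cast; exact h1)
      calc ∫ u in ((j:ℝ) * θ m)..(((j:ℕ)+1:ℕ) * θ m), g u
          ≤ ((((j:ℕ)+1:ℕ):ℝ) * θ m - (j:ℝ) * θ m) * g (((j:ℕ)+1:ℕ) * θ m) := this
        _ = θ m * g (((j:ℕ)+1:ℕ) * θ m) := by push_cast; ring
    have hL : L m (j+1) = L m j + g (((j:ℕ)+1:ℕ) * θ m) := by
      unfold L
      rw [← Finset.sum_Icc_succ_top (Nat.one_le_iff_ne_zero.mpr (Nat.succ_ne_zero j))]
    rw [hL]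
    have := ih hj'
    push_cast at hFadd hint ⊢
    nlinarith [hint]

lemma L_upper {m j : ℕ} (hj : j + 1 ≤ m) :
    θ m * L m j ≤ F (((j:ℝ)+1) * θ m) - F (θ m) := by
  induction j with
  | zero => simp [L]
  | succ j ih =>
    have hθ := θ_pos m
    have hj1 : j + 1 ≤ m := Nat.le_of_succ_le hj
    have hb : ((j:ℝ)+2) * θ m ≤ π/2 := by
      have := mul_θ_le (m := m) (j := j + 2) (by omega); push_cast at this; linarith
    have ha0 : (0:ℝ) < ((j:ℝ)+1) * θ m := by positivity
    have hmem1 : ((j:ℝ)+1) * θ m ∈ Icc (0:ℝ) (π/2) := ⟨ha0.le, by nlinarith⟩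
    have hmem2 : ((j:ℝ)+2) * θ m ∈ Icc (0:ℝ) (π/2) := ⟨by positivity, hb⟩
    have hFadd : F (((j:ℝ)+2) * θ m)
        = F (((j:ℝ)+1) * θ m) + ∫ u in (((j:ℝ)+1) * θ m)..(((j:ℝ)+2) * θ m), g u :=
      F_add (m := m) hmem1 hmem2
    have hint : θ m * g (((j:ℝ)+1) * θ m)
        ≤ ∫ u in (((j:ℝ)+1) * θ m)..(((j:ℝ)+2) * θ m), g u := by
      have := const_le_integral (a := ((j:ℝ)+1) * θ m) (b := ((j:ℝ)+2) * θ m)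
        ha0 (by nlinarith) hb
      calc θ m * g (((j:ℝ)+1) * θ m)
          = (((j:ℝ)+2) * θ m - ((j:ℝ)+1) * θ m) * g (((j:ℝ)+1) * θ m) := by ring
        _ ≤ _ := this
    have hL : L m (j+1) = L m j + g (((j:ℕ)+1:ℕ) * θ m) := by
      unfold L
      rw [← Finset.sum_Icc_succ_top (Nat.one_le_iff_ne_zero.mpr (Nat.succ_ne_zero j))]
    rw [hL]
    have hIH := ih hj1
    have hcast : g (((j:ℕ)+1:ℕ) * θ m) = g (((j:ℝ)+1) * θ m) := by push_cast; ring_nf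
    rw [hcast]
    push_cast
    have hFx : ((j:ℝ) + 1 + 1) * θ m = ((j:ℝ)+2) * θ m := by ring
    rw [hFx]
    nlinarith [hint]

lemma abs_one_sub_exp {φ : ℝ} (h0 : 0 ≤ φ) (h1 : φ ≤ 2 * π) :
    ‖1 - Complex.exp (φ * Complex.I)‖ = 2 * Real.sin (φ / 2) := by
  have hre : (1 - Complex.exp (φ * Complex.I)).re = 1 - Real.cos φ := by
    simp [Complex.exp_ofReal_mul_I_re]
  have him : (1 - Complex.exp (φ * Complex.I)).im = -Real.sin φ := by
    simp [Complex.exp_ofReal_mul_I_im]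
  have hs : 0 ≤ Real.sin (φ / 2) :=
    Real.sin_nonneg_of_nonneg_of_le_pi (by linarith) (by linarith)
  have hsin : Real.sin φ = 2 * Real.sin (φ/2) * Real.cos (φ/2) := by
    rw [← Real.sin_two_mul]; ring_nf
  have hcos : Real.cos φ = 1 - 2 * Real.sin (φ/2) ^ 2 := by
    have h2 := Real.cos_two_mul (φ/2)
    rw [show 2*(φ/2) = φ by ring] at h2
    have hpyth := Real.sin_sq_add_cos_sq (φ/2)
    linarith
  have hpyth := Real.sin_sq_add_cos_sq (φ/2)
  rw [Complex.norm_def, Complex.normSq_apply, hre, him]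
  rw [show (1 - Real.cos φ) * (1 - Real.cos φ) + -Real.sin φ * -Real.sin φ
      = (2 * Real.sin (φ/2)) ^ 2 by rw [hsin, hcos]; nlinarith]
  exact Real.sqrt_sq (by linarith)

lemma sin_prod (m : ℕ) :
    ∏ i ∈ Finset.Icc 1 (2 * m), (2 * Real.sin (i * θ m)) = 2 * m + 1 := by
  set N : ℕ := 2 * m + 1 with hN
  have hne : N ≠ 0 := by omega
  have hprim : IsPrimitiveRoot (Complex.exp (2 * π * Complex.I / N)) N :=
    Complex.isPrimitiveRoot_exp _ hne
  rw [hN] at hprim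
  have hprod := hprim.prod_one_sub_pow_eq_order
  have habs : ∏ k ∈ Finset.range (2 * m),
      ‖1 - Complex.exp (2 * π * Complex.I / N) ^ (k + 1)‖
      = 2 * m + 1 := by
    rw [← norm_prod]
    rw [show (N : ℂ) = ((2 * m + 1 : ℕ) : ℂ) by rw [hN]] at hprod
    push_cast [hN] at hprod ⊢
    rw [hprod]
    rw [show (2 * (m:ℂ) + 1) = ((2 * (m:ℝ) + 1 : ℝ) : ℂ) by push_cast; ring]
    rw [Complex.norm_real, Real.norm_of_nonneg (by positivity)]
  have hterm : ∀ k ∈ Finset.range (2 * m),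
      ‖1 - Complex.exp (2 * π * Complex.I / N) ^ (k + 1)‖
      = 2 * Real.sin ((k + 1 : ℕ) * θ m) := by
    intro k hk
    rw [Finset.mem_range] at hk
    rw [← Complex.exp_nat_mul]
    have harg : (k + 1 : ℕ) * (2 * π * Complex.I / N)
        = ((((k:ℝ) + 1) * 2 * π / (2 * m + 1) : ℝ) : ℂ) * Complex.I := by
      rw [hN]; push_cast; ring
    rw [harg, abs_one_sub_exp]
    · congr 1
      unfold θ
      push_cast; ring
    · positivity
    · have hπ := Real.pi_pos
      rw [div_le_iff₀ (by positivity)]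
      have hk1 : (k:ℝ) + 1 ≤ 2 * m := by
        have : (k + 1 : ℕ) ≤ 2 * m := hk
        exact_mod_cast this
      nlinarith
  rw [Finset.prod_congr rfl hterm] at habs
  rw [← habs]
  rw [← Finset.Ico_add_one_right_eq_Icc, Finset.prod_Ico_eq_prod_range]
  apply Finset.prod_congr (by norm_num)
  intro k _
  norm_num [add_comm]

lemma N_theta (m : ℕ) : (2 * (m:ℝ) + 1) * θ m = π := by
  unfold θ; field_simp

lemma sin_pos_i {m i : ℕ} (h1 : 1 ≤ i) (h2 : i ≤ 2 * m) : 0 < Real.sin ((i:ℝ) * θ m) := by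
  have hθ := θ_pos m
  apply Real.sin_pos_of_pos_of_lt_pi
  · have : (1:ℝ) ≤ i := by exact_mod_cast h1
    nlinarith
  · rw [← N_theta m]
    have : (i:ℝ) ≤ 2 * m := by exact_mod_cast h2
    nlinarith

lemma L_two_m (m : ℕ) : L m (2 * m) = Real.log (2 * m + 1) := by
  unfold L g
  rw [← Real.log_prod]
  · rw [sin_prod m]
  · intro i hi
    rw [Finset.mem_Icc] at hi
    have := sin_pos_i hi.1 hi.2
    positivity

lemma L_symm (m : ℕ) : L m (2 * m) = 2 * L m m := by
  have e1 : ∀ j : ℕ, Finset.Icc 1 j = Finset.Ioc 0 j := by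
    intro j; ext x; simp [Finset.mem_Icc, Finset.mem_Ioc]; omega
  have hsplit : (∑ i ∈ Finset.Ioc 0 m, g (i * θ m)) + ∑ i ∈ Finset.Ioc m (2*m), g (i * θ m)
      = ∑ i ∈ Finset.Ioc 0 (2*m), g (i * θ m) :=
    Finset.sum_Ioc_consecutive _ (Nat.zero_le m) (by omega)
  have hrefl : ∑ i ∈ Finset.Ioc m (2*m), g (i * θ m)
      = ∑ i ∈ Finset.Ioc 0 m, g (i * θ m) := by
    apply Finset.sum_bij' (fun i (_ : i ∈ Finset.Ioc m (2*m)) => 2*m+1-i)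
      (fun i (_ : i ∈ Finset.Ioc 0 m) => 2*m+1-i)
    · intro a ha; rw [Finset.mem_Ioc] at *; omega
    · intro a ha; rw [Finset.mem_Ioc] at *; omega
    · intro a ha; rw [Finset.mem_Ioc] at ha; omega
    · intro a ha; rw [Finset.mem_Ioc] at ha; omega
    · intro a ha
      rw [Finset.mem_Ioc] at ha
      have hc : ((2*m+1-a : ℕ) : ℝ) = 2*(m:ℝ)+1-(a:ℝ) := by
        have : a ≤ 2*m+1 := by omega
        push_cast [Nat.cast_sub this]; ring
      unfold g
      rw [hc]
      rw [show (2*(m:ℝ)+1-(a:ℝ)) * θ m = π - a * θ m by rw [← N_theta m]; ring]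
      rw [Real.sin_pi_sub]
  rw [L, e1, ← hsplit, hrefl, L, e1]
  ring

lemma theta_L_m (m : ℕ) : θ m * L m m = θ m * Real.log (2 * m + 1) / 2 := by
  have := L_two_m m
  rw [L_symm m] at this
  rw [show L m m = Real.log (2*m+1) / 2 by linarith]
  ring

noncomputable def b (m k : ℕ) : ℝ := sN m m / (sN m k * sN m (m - k))

lemma angle_eq (m : ℕ) (x : ℝ) : x * π / (2*(m:ℝ)+1) = x * θ m := by
  rw [θ]; ring

lemma sin_theta_pos {m : ℕ} (hm : 1 ≤ m) : 0 < Real.sin (π / (2*(m:ℝ)+1)) := by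
  have := sin_pos_i (m := m) (i := 1) le_rfl (by omega)
  rw [← angle_eq] at this
  simpa using this

lemma sin_pos_raw {m i : ℕ} (h1 : 1 ≤ i) (h2 : i ≤ 2*m) :
    0 < Real.sin ((i:ℝ) * π / (2*(m:ℝ)+1)) := by
  rw [angle_eq]; exact sin_pos_i h1 h2

lemma sN_pos {m : ℕ} (hm : 1 ≤ m) {j : ℕ} (hj : j ≤ 2*m) : 0 < sN m j := by
  unfold sN
  apply Finset.prod_pos
  intro i hi
  rw [Finset.mem_Icc] at hi
  exact div_pos (sin_pos_raw hi.1 (le_trans hi.2 hj)) (sin_theta_pos hm)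

lemma b_pos {m : ℕ} (hm : 1 ≤ m) {k : ℕ} (hk : k ≤ m) : 0 < b m k := by
  unfold b
  have h1 := sN_pos hm (j := m) (by omega)
  have h2 := sN_pos hm (j := k) (by omega)
  have h3 := sN_pos hm (j := m - k) (by omega)
  positivity

lemma log_sN {m : ℕ} (hm : 1 ≤ m) {j : ℕ} (hj : j ≤ 2*m) :
    Real.log (sN m j) = L m j - j * g ((1:ℕ) * θ m) := by
  unfold sN L
  rw [Real.log_prod]
  · have : ∀ i ∈ Finset.Icc 1 j,
        Real.log (Real.sin (i * π / (2*(m:ℝ)+1)) / Real.sin (π / (2*(m:ℝ)+1)))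
        = g ((i:ℝ) * θ m) - g ((1:ℕ) * θ m) := by
      intro i hi
      rw [Finset.mem_Icc] at hi
      have hsi := sin_pos_raw hi.1 (le_trans hi.2 hj)
      have hs1 := sin_theta_pos hm
      rw [Real.log_div hsi.ne' hs1.ne']
      unfold g
      rw [Real.log_mul (by norm_num) (by rw [angle_eq] at hsi; exact hsi.ne'),
          Real.log_mul (by norm_num) ?h1]
      case h1 =>
        have := sin_pos_i (m := m) (i := 1) le_rfl (by omega)
        exact this.ne'
      rw [angle_eq]
      have e : ((1:ℕ):ℝ) * θ m = θ m := by norm_num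
      rw [e, θ]
      ring
    rw [Finset.sum_congr rfl this, Finset.sum_sub_distrib, Finset.sum_const, Nat.card_Icc]
    simp [nsmul_eq_mul]
  · intro i hi
    rw [Finset.mem_Icc] at hi
    exact (div_pos (sin_pos_raw hi.1 (le_trans hi.2 hj)) (sin_theta_pos hm)).ne'

lemma log_b {m : ℕ} (hm : 1 ≤ m) {k : ℕ} (hk : k ≤ m) :
    Real.log (b m k) = L m m - L m k - L m (m - k) := by
  unfold b
  have h1 := sN_pos hm (j := m) (by omega)
  have h2 := sN_pos hm (j := k) (by omega)
  have h3 := sN_pos hm (j := m - k) (by omega)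
  rw [Real.log_div h1.ne' (by positivity), Real.log_mul h2.ne' h3.ne']
  rw [log_sN hm (by omega : m ≤ 2*m), log_sN hm (by omega : k ≤ 2*m),
      log_sN hm (by omega : m - k ≤ 2*m)]
  have hc : ((m - k : ℕ) : ℝ) = (m:ℝ) - k := by
    push_cast [Nat.cast_sub hk]; ring
  rw [hc]
  ring

lemma sN_succ (m j : ℕ) :
    sN m (j + 1) = sN m j *
      (Real.sin ((j+1 : ℕ) * Real.pi / (2 * m + 1)) / Real.sin (Real.pi / (2 * m + 1))) := by
  unfold sN
  rw [← Finset.prod_Icc_succ_top (by omega : 1 ≤ j + 1)]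

lemma brec {m : ℕ} (hm : 1 ≤ m) {k : ℕ} (hk : k < m) :
    b m (k+1) = b m k *
      (Real.sin (((m-k : ℕ):ℝ) * π / (2*(m:ℝ)+1)) / Real.sin (((k+1 : ℕ):ℝ) * π / (2*(m:ℝ)+1))) := by
  have h2 := sN_pos hm (j := k) (by omega)
  have h4 := sN_pos hm (j := m - (k+1)) (by omega)
  have hs1 := sin_theta_pos hm
  have hsk1 := sin_pos_raw (m := m) (i := k+1) (by omega) (by omega)
  have hsmk := sin_pos_raw (m := m) (i := m-k) (by omega) (by omega)
  have e1 := sN_succ m k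
  have e2 : sN m (m - k) = sN m (m - (k+1)) *
      (Real.sin (((m-k:ℕ):ℝ) * π / (2*(m:ℝ)+1)) / Real.sin (π / (2*(m:ℝ)+1))) := by
    rw [show m - k = (m - (k+1)) + 1 by omega, sN_succ]
  unfold b
  rw [e1, e2]
  push_cast at *
  field_simp
  rw [mul_div_assoc, div_self (by convert hsmk.ne' using 2; ring), mul_one]

lemma sin_le_sin_angle {m i j : ℕ} (h1 : 1 ≤ i) (hij : i ≤ j) (hj : j ≤ m) :
    Real.sin ((i:ℝ) * π / (2*(m:ℝ)+1)) ≤ Real.sin ((j:ℝ) * π / (2*(m:ℝ)+1)) := by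
  rw [angle_eq, angle_eq]
  have hθ := θ_pos m
  have hjm := mul_θ_le (m := m) hj
  have hii : (i:ℝ) ≤ (j:ℝ) := by exact_mod_cast hij
  have hi0 : (0:ℝ) ≤ (i:ℝ) := by positivity
  apply Real.sin_le_sin_of_le_of_le_pi_div_two _ hjm
  · nlinarith
  · have := Real.pi_pos; nlinarith

lemma b_le_succ {m : ℕ} (hm : 1 ≤ m) {k : ℕ} (hk : k + 1 ≤ (m+1)/2) :
    b m k ≤ b m (k+1) := by
  have hkm : k < m := by omega
  have hsk1 := sin_pos_raw (m := m) (i := k+1) (by omega) (by omega)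
  have hsmk := sin_pos_raw (m := m) (i := m-k) (by omega) (by omega)
  have hb := b_pos hm (le_of_lt hkm)
  have hsin : Real.sin (((k+1:ℕ):ℝ) * π / (2*(m:ℝ)+1))
      ≤ Real.sin (((m-k:ℕ):ℝ) * π / (2*(m:ℝ)+1)) :=
    sin_le_sin_angle (by omega) (by omega) (by omega)
  rw [brec hm hkm]
  have hr : (1:ℝ) ≤ Real.sin (((m-k:ℕ):ℝ) * π / (2*(m:ℝ)+1))
      / Real.sin (((k+1:ℕ):ℝ) * π / (2*(m:ℝ)+1)) := by
    rw [le_div_iff₀ hsk1]; linarith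
  nlinarith

lemma succ_le_b {m : ℕ} (hm : 1 ≤ m) {k : ℕ} (h : (m+1)/2 ≤ k) (hk : k < m) :
    b m (k+1) ≤ b m k := by
  have hsk1 := sin_pos_raw (m := m) (i := k+1) (by omega) (by omega)
  have hsmk := sin_pos_raw (m := m) (i := m-k) (by omega) (by omega)
  have hb := b_pos hm (le_of_lt hk)
  have hsin : Real.sin (((m-k:ℕ):ℝ) * π / (2*(m:ℝ)+1))
      ≤ Real.sin (((k+1:ℕ):ℝ) * π / (2*(m:ℝ)+1)) :=
    sin_le_sin_angle (by omega) (by omega) (by omega)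
  rw [brec hm hk]
  have hr : Real.sin (((m-k:ℕ):ℝ) * π / (2*(m:ℝ)+1))
      / Real.sin (((k+1:ℕ):ℝ) * π / (2*(m:ℝ)+1)) ≤ 1 := by
    rw [div_le_one hsk1]; linarith
  nlinarith

lemma b_le_b_k0 {m : ℕ} (hm : 1 ≤ m) {k : ℕ} (hk : k ≤ m) :
    b m k ≤ b m ((m+1)/2) := by
  have up : ∀ d j, j + d = (m+1)/2 → b m j ≤ b m ((m+1)/2) := by
    intro d
    induction d with
    | zero => intro j h; rw [show j = (m+1)/2 by omega]
    | succ d ih =>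
      intro j h
      calc b m j ≤ b m (j+1) := b_le_succ hm (by omega)
        _ ≤ _ := ih (j+1) (by omega)
  have down : ∀ d, (m+1)/2 + d ≤ m → b m ((m+1)/2 + d) ≤ b m ((m+1)/2) := by
    intro d
    induction d with
    | zero => intro _; rw [Nat.add_zero]
    | succ d ih =>
      intro h
      calc b m ((m+1)/2 + (d+1)) = b m (((m+1)/2 + d) + 1) := by rw [Nat.add_assoc]
        _ ≤ b m ((m+1)/2 + d) := succ_le_b hm (by omega) (by omega)
        _ ≤ _ := ih (by omega)
  rcases le_or_gt k ((m+1)/2) with h | h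
  · exact up ((m+1)/2 - k) k (by omega)
  · have := down (k - (m+1)/2) (by omega)
    rwa [show (m+1)/2 + (k - (m+1)/2) = k by omega] at this

lemma sixjN_lower {m : ℕ} (hm : 1 ≤ m) : b m ((m+1)/2) ^ 4 ≤ sixjN m := by
  unfold sixjN
  have hk0 : (m+1)/2 ∈ Finset.range (m+1) := by
    rw [Finset.mem_range]; omega
  exact Finset.single_le_sum (f := fun k => (sN m m / (sN m k * sN m (m-k)))^4)
    (fun i _ => by positivity) hk0

lemma sixjN_upper {m : ℕ} (hm : 1 ≤ m) : sixjN m ≤ (m+1) * b m ((m+1)/2) ^ 4 := by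
  unfold sixjN
  calc ∑ k ∈ Finset.range (m+1), (sN m m / (sN m k * sN m (m-k)))^4
      ≤ ∑ _k ∈ Finset.range (m+1), b m ((m+1)/2) ^ 4 := by
        apply Finset.sum_le_sum
        intro i hi
        rw [Finset.mem_range] at hi
        have h1 : (0:ℝ) ≤ b m i := (b_pos hm (by omega)).le
        exact pow_le_pow_left₀ h1 (b_le_b_k0 hm (by omega)) 4
    _ = (m+1) * b m ((m+1)/2) ^ 4 := by
        rw [Finset.sum_const, Finset.card_range]
        push_cast
        ring

lemma sixjN_pos {m : ℕ} (hm : 1 ≤ m) : 0 < sixjN m := by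
  have hb := b_pos hm (show (m+1)/2 ≤ m by omega)
  exact lt_of_lt_of_le (by positivity) (sixjN_lower hm)

lemma denom_atTop : Tendsto (fun m : ℕ => 2*(m:ℝ)+1) atTop atTop :=
  tendsto_atTop_add_const_right _ 1 (tendsto_natCast_atTop_atTop.const_mul_atTop two_pos)

lemma θ_to_zero : Tendsto θ atTop (nhds 0) := by
  have h : Tendsto (fun m : ℕ => π / (2*(m:ℝ)+1)) atTop (nhds 0) :=
    Tendsto.div_atTop tendsto_const_nhds denom_atTop
  exact h

lemma lim_frac (a c : ℝ) :
    Tendsto (fun m : ℕ => (a*(m:ℝ)+c) / (2*(m:ℝ)+1)) atTop (nhds (a/2)) := by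
  have h1 : Tendsto (fun m : ℕ => a + c * (1/(m:ℝ))) atTop (nhds a) := by
    simpa using tendsto_const_nhds.add ((tendsto_one_div_atTop_nhds_zero_nat (𝕜 := ℝ)).const_mul c)
  have h2 : Tendsto (fun m : ℕ => 2 + (1/(m:ℝ))) atTop (nhds 2) := by
    simpa using tendsto_const_nhds.add (tendsto_one_div_atTop_nhds_zero_nat (𝕜 := ℝ))
  have h3 := h1.div h2 (by norm_num)
  apply h3.congr'
  filter_upwards [eventually_ge_atTop 1] with m hm
  have hm0 : (0:ℝ) < (m:ℝ) := by exact_mod_cast hm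
  simp only [Pi.div_apply]
  field_simp

lemma theta_mul_lim (c d : ℝ) {k : ℕ → ℕ}
    (h1 : ∀ᶠ m : ℕ in atTop, (m:ℝ) + c ≤ 2 * (k m : ℝ))
    (h2 : ∀ᶠ m : ℕ in atTop, 2 * (k m : ℝ) ≤ (m:ℝ) + d) :
    Tendsto (fun m : ℕ => ((k m : ℕ):ℝ) * θ m) atTop (nhds (π/4)) := by
  have hl := (lim_frac 1 c).const_mul (π/2)
  have hu := (lim_frac 1 d).const_mul (π/2)
  rw [show π/2 * ((1:ℝ)/2) = π/4 by ring] at hl hu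
  apply tendsto_of_tendsto_of_tendsto_of_le_of_le' hl hu
  · filter_upwards [h1] with m hm
    have hθ := θ_pos m
    have hd : (0:ℝ) < 2*(m:ℝ)+1 := by positivity
    rw [show π/2 * ((1*(m:ℝ)+c)/(2*(m:ℝ)+1)) = (((m:ℝ)+c)/2) * θ m by
      rw [θ]; field_simp]
    apply mul_le_mul_of_nonneg_right _ hθ.le
    linarith
  · filter_upwards [h2] with m hm
    have hθ := θ_pos m
    have hd : (0:ℝ) < 2*(m:ℝ)+1 := by positivity
    rw [show π/2 * ((1*(m:ℝ)+d)/(2*(m:ℝ)+1)) = (((m:ℝ)+d)/2) * θ m by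
      rw [θ]; field_simp]
    apply mul_le_mul_of_nonneg_right _ hθ.le
    linarith

lemma F_contAt : ContinuousAt F (π/4) := by
  have hπ := Real.pi_pos
  exact F_contOn.continuousAt (Icc_mem_nhds (by linarith) (by linarith))

lemma F_comp_lim {k : ℕ → ℕ} (h : Tendsto (fun m : ℕ => ((k m : ℕ):ℝ) * θ m) atTop (nhds (π/4))) :
    Tendsto (fun m : ℕ => F ((k m : ℕ) * θ m)) atTop (nhds (F (π/4))) :=
  F_contAt.tendsto.comp h

lemma F_theta_lim : Tendsto (fun m : ℕ => F (θ m)) atTop (nhds 0) := by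
  have hπ := Real.pi_pos
  have h0 : F 0 = 0 := intervalIntegral.integral_same
  have hc : ContinuousWithinAt F (Icc 0 (π/2)) 0 := F_contOn 0 ⟨le_refl 0, by linarith⟩
  have hseq : Tendsto θ atTop (nhdsWithin 0 (Icc 0 (π/2))) := by
    rw [tendsto_nhdsWithin_iff]
    refine ⟨θ_to_zero, ?_⟩
    filter_upwards [eventually_ge_atTop 1] with m hm
    have hθ := θ_pos m
    have := mul_θ_le (m := m) (j := 1) hm
    exact ⟨hθ.le, by simpa using this⟩
  have := hc.tendsto.comp hseq
  rwa [h0] at this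

lemma L_squeeze {k : ℕ → ℕ} (hkm : ∀ᶠ m : ℕ in atTop, k m ≤ m)
    (hkm1 : ∀ᶠ m : ℕ in atTop, k m + 1 ≤ m)
    (h4 : Tendsto (fun m : ℕ => ((k m : ℕ):ℝ) * θ m) atTop (nhds (π/4)))
    (h4' : Tendsto (fun m : ℕ => ((k m + 1 : ℕ):ℝ) * θ m) atTop (nhds (π/4))) :
    Tendsto (fun m : ℕ => θ m * L m (k m)) atTop (nhds (F (π/4))) := by
  have hl := F_comp_lim h4
  have hu : Tendsto (fun m : ℕ => F ((k m + 1 : ℕ) * θ m) - F (θ m)) atTop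
      (nhds (F (π/4))) := by
    have := (F_comp_lim h4').sub F_theta_lim
    simpa using this
  apply tendsto_of_tendsto_of_tendsto_of_le_of_le' hl hu
  · filter_upwards [hkm] with m hm
    exact L_lower hm
  · filter_upwards [hkm1] with m hm
    have := L_upper (m := m) (j := k m) hm
    have hc : ((k m + 1 : ℕ):ℝ) = ((k m : ℕ):ℝ) + 1 := by push_cast; ring
    rw [hc]
    exact this

lemma log_div_lim : Tendsto (fun m : ℕ => θ m * Real.log (2 * (m:ℝ) + 1)) atTop (nhds 0) := by
  have hlog : Tendsto (fun x : ℝ => Real.log x / x) atTop (nhds 0) :=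
    Real.isLittleO_log_id_atTop.tendsto_div_nhds_zero
  have hcomp : Tendsto (fun m : ℕ => Real.log (2*(m:ℝ)+1) / (2*(m:ℝ)+1)) atTop (nhds 0) :=
    hlog.comp denom_atTop
  have := hcomp.const_mul π
  rw [mul_zero] at this
  apply this.congr
  intro m
  rw [θ]
  ring

lemma k0_theta : Tendsto (fun m : ℕ => (((m+1)/2 : ℕ):ℝ) * θ m) atTop (nhds (π/4)) := by
  apply theta_mul_lim 0 1
  · filter_upwards with m
    have : m ≤ 2 * ((m+1)/2) := by omega
    have := (Nat.cast_le (α := ℝ)).mpr this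
    push_cast at this ⊢
    linarith
  · filter_upwards with m
    have : 2 * ((m+1)/2) ≤ m + 1 := by omega
    have := (Nat.cast_le (α := ℝ)).mpr this
    push_cast at this ⊢
    linarith

lemma k0_theta' : Tendsto (fun m : ℕ => (((m+1)/2 + 1 : ℕ):ℝ) * θ m) atTop (nhds (π/4)) := by
  apply theta_mul_lim 2 3
  · filter_upwards with m
    have : m + 2 ≤ 2 * ((m+1)/2 + 1) := by omega
    have := (Nat.cast_le (α := ℝ)).mpr this
    push_cast at this ⊢
    linarith
  · filter_upwards with m
    have : 2 * ((m+1)/2 + 1) ≤ m + 3 := by omega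
    have := (Nat.cast_le (α := ℝ)).mpr this
    push_cast at this ⊢
    linarith

lemma mk0_theta : Tendsto (fun m : ℕ => ((m - (m+1)/2 : ℕ):ℝ) * θ m) atTop (nhds (π/4)) := by
  apply theta_mul_lim (-1) 0
  · filter_upwards with m
    have : m - 1 ≤ 2 * (m - (m+1)/2) := by omega
    have := (Nat.cast_le (α := ℝ)).mpr this
    have hm1 : ((m - 1 : ℕ):ℝ) ≥ (m:ℝ) - 1 := by
      rcases Nat.eq_zero_or_pos m with h | h
      · subst h; norm_num
      · rw [Nat.cast_sub h]; norm_num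
    push_cast at this ⊢
    linarith
  · filter_upwards with m
    have : 2 * (m - (m+1)/2) ≤ m := by omega
    have := (Nat.cast_le (α := ℝ)).mpr this
    push_cast at this ⊢
    linarith

lemma mk0_theta' : Tendsto (fun m : ℕ => ((m - (m+1)/2 + 1 : ℕ):ℝ) * θ m) atTop (nhds (π/4)) := by
  apply theta_mul_lim 1 2
  · filter_upwards [eventually_ge_atTop 1] with m hm
    have : m + 1 ≤ 2 * (m - (m+1)/2 + 1) := by omega
    have := (Nat.cast_le (α := ℝ)).mpr this
    push_cast at this ⊢
    linarith
  · filter_upwards with m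
    have : 2 * (m - (m+1)/2 + 1) ≤ m + 2 := by omega
    have := (Nat.cast_le (α := ℝ)).mpr this
    push_cast at this ⊢
    linarith

lemma L_k0_lim : Tendsto (fun m : ℕ => θ m * L m ((m+1)/2)) atTop (nhds (F (π/4))) :=
  L_squeeze (by filter_upwards [eventually_ge_atTop 1] with m hm; omega)
    (by filter_upwards [eventually_ge_atTop 3] with m hm; omega) k0_theta k0_theta'

lemma L_mk0_lim : Tendsto (fun m : ℕ => θ m * L m (m - (m+1)/2)) atTop (nhds (F (π/4))) :=
  L_squeeze (by filter_upwards with m; omega)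
    (by filter_upwards [eventually_ge_atTop 1] with m hm; omega) mk0_theta mk0_theta'

lemma log_b_lim :
    Tendsto (fun m : ℕ => θ m * Real.log (b m ((m+1)/2))) atTop (nhds (-2 * F (π/4))) := by
  have h1 : Tendsto (fun m : ℕ => θ m * L m m - θ m * L m ((m+1)/2) - θ m * L m (m - (m+1)/2))
      atTop (nhds (0 - F (π/4) - F (π/4))) := by
    refine Tendsto.sub (Tendsto.sub ?_ L_k0_lim) L_mk0_lim
    have h2 : Tendsto (fun m : ℕ => θ m * Real.log (2 * (m:ℝ) + 1) / 2) atTop (nhds 0) := by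
      have := log_div_lim.div_const 2
      simpa using this
    apply h2.congr
    intro m
    rw [theta_L_m m]
  rw [show (0:ℝ) - F (π/4) - F (π/4) = -2 * F (π/4) by ring] at h1
  apply h1.congr'
  filter_upwards [eventually_ge_atTop 1] with m hm
  rw [log_b hm (by omega : (m+1)/2 ≤ m)]
  ring

end SixJ

open SixJ in
/-- Costantino's asymptotics: `(2π/(2n+1))·log(sixj_{2n+1})` converges to
`−16·∫₀^{π/4} log(2 sin u) du`, twice the volume of the regular ideal octahedron. -/
theorem sixj_asymptotics :
    Tendsto (fun n : ℕ => 2 * Real.pi / (2 * n + 1) * Real.log (sixjN n)) atTop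
      (nhds (-16 * ∫ u in (0:ℝ)..(Real.pi / 4), Real.log (2 * Real.sin u))) := by
  have htarget : (-16 : ℝ) * ∫ u in (0:ℝ)..(Real.pi / 4), Real.log (2 * Real.sin u)
      = -16 * F (π/4) := rfl
  rw [htarget]
  have hl : Tendsto (fun m : ℕ => 8 * (θ m * Real.log (b m ((m+1)/2)))) atTop
      (nhds (-16 * F (π/4))) := by
    have := log_b_lim.const_mul 8
    rw [show (8:ℝ) * (-2 * F (π/4)) = -16 * F (π/4) by ring] at this
    exact this
  have hmlog : Tendsto (fun m : ℕ => 2 * θ m * Real.log ((m:ℝ)+1)) atTop (nhds 0) := by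
    apply tendsto_of_tendsto_of_tendsto_of_le_of_le' tendsto_const_nhds
      (h := fun m : ℕ => 2 * (θ m * Real.log (2*(m:ℝ)+1)))
      (by simpa using log_div_lim.const_mul 2)
    · filter_upwards with m
      have hθ := θ_pos m
      have : (0:ℝ) ≤ Real.log ((m:ℝ)+1) := Real.log_nonneg (by push_cast; linarith [Nat.cast_nonneg (α := ℝ) m])
      positivity
    · filter_upwards with m
      have hθ := θ_pos m
      have hle : Real.log ((m:ℝ)+1) ≤ Real.log (2*(m:ℝ)+1) := by
        apply Real.log_le_log (by positivity)
        linarith [Nat.cast_nonneg (α := ℝ) m]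
      nlinarith
  have hu : Tendsto (fun m : ℕ => 2 * θ m * Real.log ((m:ℝ)+1)
      + 8 * (θ m * Real.log (b m ((m+1)/2)))) atTop (nhds (-16 * F (π/4))) := by
    have := hmlog.add hl
    simpa using this
  apply tendsto_of_tendsto_of_tendsto_of_le_of_le' hl hu
  · filter_upwards [eventually_ge_atTop 1] with m hm
    have hθ := θ_pos m
    have hb := b_pos hm (show (m+1)/2 ≤ m by omega)
    have hlow := sixjN_lower hm
    have hlog : 4 * Real.log (b m ((m+1)/2)) ≤ Real.log (sixjN m) := by
      have := Real.log_le_log (by positivity) hlow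
      rwa [Real.log_pow, show ((4:ℕ):ℝ) = 4 by norm_num] at this
    have heq : 2 * Real.pi / (2 * (m:ℝ) + 1) = 2 * θ m := by rw [θ]; ring
    rw [heq]
    nlinarith
  · filter_upwards [eventually_ge_atTop 1] with m hm
    have hθ := θ_pos m
    have hb := b_pos hm (show (m+1)/2 ≤ m by omega)
    have hup := sixjN_upper hm
    have hpos := sixjN_pos hm
    have hlog : Real.log (sixjN m) ≤ Real.log ((m:ℝ)+1) + 4 * Real.log (b m ((m+1)/2)) := by
      have h1 := Real.log_le_log hpos hup
      have hm1 : (0:ℝ) < (m:ℝ)+1 := by positivity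
      rw [Real.log_mul hm1.ne' (by positivity), Real.log_pow] at h1
      push_cast at h1 ⊢
      linarith
    have heq : 2 * Real.pi / (2 * (m:ℝ) + 1) = 2 * θ m := by rw [θ]; ring
    rw [heq]
    nlinarith
end

section
/- Fix natural numbers t, r and an integer θ. For an odd integer N = 2m+1 ≥ 3 define s_N(j) = ∏_{i=1}^{j} (sin(iπ/N)/sin(π/N)) for 0 ≤ j ≤ m, define sixj_N = Σ_{k=0}^{m} ( s_N(m)/(s_N(k)·s_N(m−k)) )^4, a positive real number, and define φ_N = (−1)^{(N−1)/2} · exp( ((N^2−1)/(4N)) · πi ) ∈ ℂ. Then the sequence n ↦ (2π/(2n+1)) · log| φ_{2n+1}^{θ} · (2n+1)^{r} · sixj_{2n+1}^{t+1} | converges, as n → ∞, to −16·(t+1)·∫_{0}^{π/4} log(2 sin u) du. -/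
open Real Filter Complex

/-- The half-twist factor `φ_N = (−1)^{(N−1)/2}·exp(((N²−1)/(4N))·πi)` for `N = 2n+1`. -/
noncomputable def phiN (n : ℕ) : ℂ :=
  (-1 : ℂ) ^ n *
    Complex.exp ((((2 * n + 1 : ℂ) ^ 2 - 1) / (4 * (2 * n + 1 : ℂ))) * Real.pi * Complex.I)

section AuxVolumeConjecture
open MeasureTheory intervalIntegral Set Topology
set_option maxRecDepth 8000



noncomputable def lsin (u : ℝ) : ℝ := Real.log (2 * Real.sin u)

lemma lsin_mono {x y : ℝ} (hx : 0 < x) (hxy : x ≤ y) (hy : y ≤ π / 2) :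
    lsin x ≤ lsin y := by
  have hsx : 0 < Real.sin x := Real.sin_pos_of_pos_of_lt_pi hx (by linarith [Real.pi_pos])
  have : Real.sin x ≤ Real.sin y :=
    Real.sin_le_sin_of_le_of_le_pi_div_two (by linarith [Real.pi_pos.le]) hy hxy
  exact Real.log_le_log (by linarith) (by linarith)

lemma lsin_le_log_two {x : ℝ} (hx : 0 < x) (hx' : x < π) : lsin x ≤ Real.log 2 := by
  have hsx : 0 < Real.sin x := Real.sin_pos_of_pos_of_lt_pi hx hx'
  have : Real.sin x ≤ 1 := Real.sin_le_one x
  exact Real.log_le_log (by linarith) (by linarith)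

lemma neg_log_le {u : ℝ} (hu : 0 < u) : -Real.log u ≤ 2 * u ^ (-(1/2) : ℝ) := by
  have h1 : 0 < u ^ (-(1/2) : ℝ) := Real.rpow_pos_of_pos hu _
  have h2 : Real.log (u ^ (-(1/2) : ℝ)) = -(1/2) * Real.log u := Real.log_rpow hu _
  have h3 : Real.log (u ^ (-(1/2) : ℝ)) ≤ u ^ (-(1/2) : ℝ) - 1 :=
    Real.log_le_sub_one_of_pos h1
  nlinarith

lemma lsin_intervalIntegrable_half : IntervalIntegrable lsin volume 0 (π / 2) := by
  have hpi := Real.pi_pos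
  rw [intervalIntegrable_iff_integrableOn_Ioc_of_le (by linarith)]
  have hg : IntegrableOn (fun u : ℝ => 2 + 2 * u ^ (-(1/2) : ℝ)) (Ioc 0 (π / 2)) volume := by
    have h1 : IntervalIntegrable (fun x : ℝ => x ^ (-(1/2) : ℝ)) volume 0 (π / 2) :=
      intervalIntegrable_rpow' (by norm_num)
    rw [intervalIntegrable_iff_integrableOn_Ioc_of_le (by linarith)] at h1
    exact (integrableOn_const measure_Ioc_lt_top.ne).add (h1.const_mul 2)
  refine Integrable.mono' hg ?_ ?_
  · exact (Real.measurable_log.comp (measurable_const.mul Real.measurable_sin)).aestronglyMeasurable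
  · refine (ae_restrict_iff' measurableSet_Ioc).2 (ae_of_all _ fun u hu => ?_)
    obtain ⟨hu0, hu2⟩ := hu
    have hs : 0 < Real.sin u := Real.sin_pos_of_pos_of_lt_pi hu0 (by linarith)
    have hsu : Real.sin u < u := Real.sin_lt hu0
    have hjord : 2 / π * u ≤ Real.sin u := Real.mul_le_sin hu0.le hu2
    have hrp : 0 < u ^ (-(1/2) : ℝ) := Real.rpow_pos_of_pos hu0 _
    rw [Real.norm_eq_abs, abs_le]
    constructor
    · -- lower bound : lsin u ≥ log u ≥ -2 u^{-1/2}
      have h1 : Real.log u ≤ lsin u := by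
        have : u ≤ 2 * Real.sin u := by
          have h5 : (1:ℝ)/2 ≤ 2/π := by
            rw [div_le_div_iff₀ (by norm_num : (0:ℝ) < 2) hpi]
            nlinarith [Real.pi_lt_d2]
          nlinarith
        exact Real.log_le_log hu0 this
      have h2 := neg_log_le hu0
      simp only [neg_add_rev]
      nlinarith
    · -- upper bound : lsin u ≤ log π ≤ 2
      have h1 : lsin u ≤ Real.log π := Real.log_le_log (by linarith) (by nlinarith)
      have h2 : Real.log π ≤ Real.log 4 := Real.log_le_log hpi (by nlinarith [Real.pi_lt_d2])
      have h3 : Real.log 4 = 2 * Real.log 2 := by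
        rw [show (4:ℝ) = 2 ^ 2 by norm_num, Real.log_pow]; push_cast; ring
      have h4 := Real.log_two_lt_d9
      nlinarith
lemma lsin_intervalIntegrable {a b : ℝ} (ha : a ∈ Icc (0:ℝ) π) (hb : b ∈ Icc (0:ℝ) π) :
    IntervalIntegrable lsin volume a b := by
  have hpi := Real.pi_pos
  have h2 : IntervalIntegrable lsin volume (π / 2) π := by
    have := (lsin_intervalIntegrable_half.comp_sub_left π)
    simp only [sub_zero, sub_self] at this
    rw [show π - π/2 = π/2 by ring] at this
    have heq : (fun x => lsin (π - x)) = lsin := by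
      funext x; simp [lsin, Real.sin_pi_sub]
    rw [heq] at this
    exact this.symm
  have h01 : IntervalIntegrable lsin volume 0 π := lsin_intervalIntegrable_half.trans h2
  exact h01.mono_set (Set.uIcc_subset_uIcc
    (by rwa [Set.uIcc_of_le hpi.le]) (by rwa [Set.uIcc_of_le hpi.le]))

noncomputable def Flob (x : ℝ) : ℝ := ∫ u in (0:ℝ)..x, lsin u

lemma Flob_continuousOn : ContinuousOn Flob (Icc 0 π) := by
  have hpi := Real.pi_pos
  have hint : IntegrableOn lsin (uIcc 0 π) volume := by
    rw [Set.uIcc_of_le hpi.le, integrableOn_Icc_iff_integrableOn_Ioc]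
    exact (intervalIntegrable_iff_integrableOn_Ioc_of_le hpi.le).1
      (lsin_intervalIntegrable (Set.left_mem_Icc.2 hpi.le) (Set.right_mem_Icc.2 hpi.le))
  have := intervalIntegral.continuousOn_primitive_interval (a := 0) (b := π) (μ := volume) hint
  rwa [Set.uIcc_of_le hpi.le] at this

lemma integral_lsin_half' : (∫ u in (0:ℝ)..(π/2), lsin u) = 0 := by
  have hpi := Real.pi_pos
  set I := ∫ u in (0:ℝ)..(π/2), lsin u with hI
  have hmem0 : (0:ℝ) ∈ Icc (0:ℝ) π := Set.left_mem_Icc.2 hpi.le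
  have hmemh : π/2 ∈ Icc (0:ℝ) π := ⟨by linarith, by linarith⟩
  have hmemp : π ∈ Icc (0:ℝ) π := Set.right_mem_Icc.2 hpi.le
  -- second half equals I
  have hrefl : (∫ u in (π/2)..π, lsin u) = I := by
    have := intervalIntegral.integral_comp_sub_left (a := (0:ℝ)) (b := π/2) lsin π
    simp only [sub_zero] at this
    rw [show π - π/2 = π/2 by ring] at this
    rw [← this]
    simp only [lsin, Real.sin_pi_sub]
    exact hI.symm
  have hfull : (∫ u in (0:ℝ)..π, lsin u) = 2 * I := by
    rw [← intervalIntegral.integral_add_adjacent_intervals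
      (lsin_intervalIntegrable hmem0 hmemh) (lsin_intervalIntegrable hmemh hmemp), hrefl]
    ring
  -- substitution u = 2x
  have hsub : (∫ x in (0:ℝ)..(π/2), lsin (2 * x)) = I := by
    have := intervalIntegral.integral_comp_mul_left (a := (0:ℝ)) (b := π/2) lsin
      (c := 2) (by norm_num)
    rw [this, mul_zero, show (2:ℝ) * (π/2) = π by ring, hfull]
    simp
  -- lsin (2x) = lsin x + lsin (π/2 - x) a.e. on (0, π/2)
  have hcos_int : IntervalIntegrable (fun x => lsin (π/2 - x)) volume 0 (π/2) := by
    have := lsin_intervalIntegrable_half.comp_sub_left (π/2)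
    simpa using this.symm
  have hsplit : (∫ x in (0:ℝ)..(π/2), lsin (2 * x))
      = (∫ x in (0:ℝ)..(π/2), lsin x) + ∫ x in (0:ℝ)..(π/2), lsin (π/2 - x) := by
    rw [← intervalIntegral.integral_add lsin_intervalIntegrable_half hcos_int]
    apply intervalIntegral.integral_congr_ae
    have h0 : ∀ᵐ (u:ℝ), u ≠ π/2 := by
      rw [MeasureTheory.ae_iff]
      simpa using Real.volume_singleton (a := π/2)
    filter_upwards [h0] with x hx hmem
    rw [Set.uIoc_of_le (by linarith)] at hmem
    obtain ⟨hx0, hx2⟩ := hmem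
    have hx2' : x < π/2 := lt_of_le_of_ne hx2 hx
    have hs : 0 < Real.sin x := Real.sin_pos_of_pos_of_lt_pi hx0 (by linarith)
    have hc : 0 < Real.cos x := Real.cos_pos_of_mem_Ioo ⟨by linarith, hx2'⟩
    simp only [lsin]
    rw [Real.sin_two_mul, Real.sin_pi_div_two_sub,
      show 2 * (2 * Real.sin x * Real.cos x) = (2 * Real.sin x) * (2 * Real.cos x) by ring,
      Real.log_mul (by linarith) (by linarith)]
  have hI2 : (∫ x in (0:ℝ)..(π/2), lsin (π/2 - x)) = I := by
    have := intervalIntegral.integral_comp_sub_left (a := (0:ℝ)) (b := π/2) lsin (π/2)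
    rw [this, sub_self, sub_zero]
  rw [hsplit, hI2] at hsub
  have hII : (∫ x in (0:ℝ)..(π/2), lsin x) = I := rfl
  rw [hII] at hsub
  linarith

lemma integral_lsin_half : Flob (π / 2) = 0 := integral_lsin_half'
noncomputable def hstep (n : ℕ) : ℝ := π / (2 * n + 1)

noncomputable def Sl (n j : ℕ) : ℝ := ∑ i ∈ Finset.Icc 1 j, lsin (i * hstep n)

lemma hstep_pos (n : ℕ) : 0 < hstep n := by
  have := Real.pi_pos; unfold hstep; positivity

lemma hstep_le_pi (n : ℕ) : hstep n ≤ π := by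
  unfold hstep
  rw [div_le_iff₀ (by positivity)]
  nlinarith [Real.pi_pos, Nat.cast_nonneg (α := ℝ) n]

lemma mul_hstep_lt_half {n j : ℕ} (hj : j ≤ n) : (j : ℝ) * hstep n < π / 2 := by
  have hpi := Real.pi_pos
  have hjn : (j : ℝ) ≤ n := Nat.cast_le.2 hj
  unfold hstep
  rw [mul_div_assoc']
  rw [div_lt_iff₀ (by positivity)]
  have hn0 : (0:ℝ) ≤ (n:ℝ) := Nat.cast_nonneg n
  nlinarith

lemma mul_hstep_mem {n j : ℕ} (hj : j ≤ n) : (j : ℝ) * hstep n ∈ Icc (0:ℝ) π := by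
  have h1 := mul_hstep_lt_half hj
  have h2 := hstep_pos n
  constructor
  · positivity
  · linarith [Real.pi_pos]

lemma ae_ne_zero' (c : ℝ) : ∀ᵐ (u : ℝ), u ≠ c := by
  rw [MeasureTheory.ae_iff]
  simpa using Real.volume_singleton (a := c)

lemma riemann_lower (n : ℕ) : ∀ j : ℕ, j ≤ n →
    Flob ((j : ℝ) * hstep n) ≤ hstep n * Sl n j := by
  intro j
  induction j with
  | zero => simp [Flob, Sl]
  | succ j ih =>
    intro hj
    have hj' : j ≤ n := Nat.le_of_succ_le hj
    have hpos := hstep_pos n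
    have hm1 := mul_hstep_mem hj'
    have hm2 := mul_hstep_mem hj
    have hcast : ((j + 1 : ℕ) : ℝ) = (j : ℝ) + 1 := by push_cast; ring
    rw [hcast] at hm2
    have hhalf := mul_hstep_lt_half hj
    rw [hcast] at hhalf
    have hle : (j : ℝ) * hstep n ≤ ((j:ℝ)+1) * hstep n := by
      nlinarith [Nat.cast_nonneg (α := ℝ) j]
    have hI1 : IntervalIntegrable lsin volume 0 ((j : ℝ) * hstep n) :=
      lsin_intervalIntegrable (Set.left_mem_Icc.2 Real.pi_pos.le) hm1
    have hI2 : IntervalIntegrable lsin volume ((j : ℝ) * hstep n) (((j:ℝ)+1) * hstep n) :=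
      lsin_intervalIntegrable hm1 hm2
    have hadd : Flob (((j:ℝ)+1) * hstep n) = Flob ((j:ℝ) * hstep n)
        + ∫ u in ((j:ℝ) * hstep n)..(((j:ℝ)+1) * hstep n), lsin u := by
      rw [Flob, Flob, intervalIntegral.integral_add_adjacent_intervals hI1 hI2]
    have hkey : (∫ u in ((j:ℝ) * hstep n)..(((j:ℝ)+1) * hstep n), lsin u)
        ≤ hstep n * lsin (((j:ℝ)+1) * hstep n) := by
      have hconst : (∫ _u in ((j:ℝ) * hstep n)..(((j:ℝ)+1) * hstep n),
          lsin (((j:ℝ)+1) * hstep n)) = hstep n * lsin (((j:ℝ)+1) * hstep n) := by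
        rw [intervalIntegral.integral_const, smul_eq_mul]; ring_nf
      rw [← hconst]
      refine intervalIntegral.integral_mono_ae_restrict hle hI2 intervalIntegrable_const ?_
      refine (ae_restrict_iff' measurableSet_Icc).2 ?_
      filter_upwards [ae_ne_zero' 0] with u hu hmem
      have hu0 : 0 < u := lt_of_le_of_ne (le_trans (by positivity) hmem.1) (Ne.symm hu)
      exact lsin_mono hu0 hmem.2 hhalf.le
    have hsum : Sl n (j + 1) = Sl n j + lsin (((j:ℝ)+1) * hstep n) := by
      rw [Sl, Sl, Finset.sum_Icc_succ_top (Nat.succ_le_succ (Nat.zero_le j))]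
      norm_num
    rw [hcast, hsum, hadd, mul_add]
    have := ih hj'
    linarith

lemma riemann_upper (n : ℕ) : ∀ j : ℕ, 1 ≤ j → j ≤ n →
    hstep n * Sl n j ≤ Flob ((j : ℝ) * hstep n) - Flob (hstep n)
      + hstep n * lsin ((j : ℝ) * hstep n) := by
  intro j
  induction j with
  | zero => omega
  | succ j ih =>
    intro _ hj
    have hpos := hstep_pos n
    rcases Nat.eq_zero_or_pos j with rfl | hj1
    · simp only [Sl, Finset.Icc_self, Finset.sum_singleton, Nat.cast_one]
      norm_num
    · have hj' : j ≤ n := Nat.le_of_succ_le hj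
      have IH := ih hj1 hj'
      have hm1 := mul_hstep_mem hj'
      have hm2 := mul_hstep_mem hj
      have hcast : ((j + 1 : ℕ) : ℝ) = (j : ℝ) + 1 := by push_cast; ring
      rw [hcast] at hm2
      have hhalf := mul_hstep_lt_half hj
      rw [hcast] at hhalf
      have hle : (j : ℝ) * hstep n ≤ ((j:ℝ)+1) * hstep n := by
        nlinarith [Nat.cast_nonneg (α := ℝ) j]
      have hjpos : (0:ℝ) < (j : ℝ) * hstep n := by
        have : (0:ℝ) < (j:ℝ) := Nat.cast_pos.2 hj1
        positivity
      have hI1 : IntervalIntegrable lsin volume 0 ((j : ℝ) * hstep n) :=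
        lsin_intervalIntegrable (Set.left_mem_Icc.2 Real.pi_pos.le) hm1
      have hI2 : IntervalIntegrable lsin volume ((j : ℝ) * hstep n) (((j:ℝ)+1) * hstep n) :=
        lsin_intervalIntegrable hm1 hm2
      have hadd : Flob (((j:ℝ)+1) * hstep n) = Flob ((j:ℝ) * hstep n)
          + ∫ u in ((j:ℝ) * hstep n)..(((j:ℝ)+1) * hstep n), lsin u := by
        rw [Flob, Flob, intervalIntegral.integral_add_adjacent_intervals hI1 hI2]
      have hkey : hstep n * lsin ((j:ℝ) * hstep n)
          ≤ ∫ u in ((j:ℝ) * hstep n)..(((j:ℝ)+1) * hstep n), lsin u := by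
        have hconst : (∫ _u in ((j:ℝ) * hstep n)..(((j:ℝ)+1) * hstep n),
            lsin ((j:ℝ) * hstep n)) = hstep n * lsin ((j:ℝ) * hstep n) := by
          rw [intervalIntegral.integral_const, smul_eq_mul]; ring_nf
        rw [← hconst]
        refine intervalIntegral.integral_mono_on hle intervalIntegrable_const hI2 ?_
        intro x hx
        exact lsin_mono hjpos hx.1 (le_trans hx.2 hhalf.le)
      have hsum : Sl n (j + 1) = Sl n j + lsin (((j:ℝ)+1) * hstep n) := by
        rw [Sl, Sl, Finset.sum_Icc_succ_top (Nat.succ_le_succ (Nat.zero_le j))]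
        norm_num
      rw [hcast, hsum, mul_add]
      linarith
lemma hstep_tendsto : Tendsto hstep atTop (𝓝 0) := by
  have h1 : Tendsto (fun n : ℕ => (2 * (n:ℝ) + 1)) atTop atTop := by
    apply Filter.tendsto_atTop_add_const_right
    exact (tendsto_natCast_atTop_atTop).const_mul_atTop (by norm_num)
  have h2 : Tendsto (fun x : ℝ => π / x) atTop (𝓝 0) :=
    tendsto_const_nhds.div_atTop tendsto_id
  exact h2.comp h1

lemma Sl_tendsto (j : ℕ → ℕ) (hjn : ∀ n, j n ≤ n) (hj1 : ∀ᶠ n in atTop, 1 ≤ j n)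
    {a : ℝ} (ha : a ∈ Ioo (0:ℝ) π)
    (hconv : Tendsto (fun n => (j n : ℝ) * hstep n) atTop (𝓝 a)) :
    Tendsto (fun n => hstep n * Sl n (j n)) atTop (𝓝 (Flob a)) := by
  have hpi := Real.pi_pos
  have hFa : Tendsto (fun n => Flob ((j n : ℝ) * hstep n)) atTop (𝓝 (Flob a)) := by
    have hc : ContinuousAt Flob a :=
      Flob_continuousOn.continuousAt (Icc_mem_nhds ha.1 ha.2)
    exact hc.tendsto.comp hconv
  have hFh : Tendsto (fun n => Flob (hstep n)) atTop (𝓝 0) := by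
    have hc : ContinuousWithinAt Flob (Icc 0 π) 0 :=
      Flob_continuousOn 0 (Set.left_mem_Icc.2 hpi.le)
    have hmem : Tendsto hstep atTop (𝓝[Icc (0:ℝ) π] 0) := by
      rw [tendsto_nhdsWithin_iff]
      exact ⟨hstep_tendsto, Eventually.of_forall fun n => ⟨(hstep_pos n).le, hstep_le_pi n⟩⟩
    have := hc.tendsto.comp hmem
    have h0 : Flob 0 = 0 := by simp [Flob]
    rwa [h0] at this
  have hhl2 : Tendsto (fun n => hstep n * Real.log 2) atTop (𝓝 0) := by
    simpa using hstep_tendsto.mul_const (Real.log 2)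
  have hupper : Tendsto (fun n => Flob ((j n : ℝ) * hstep n) - Flob (hstep n)
      + hstep n * Real.log 2) atTop (𝓝 (Flob a)) := by
    have := (hFa.sub hFh).add hhl2
    simpa using this
  refine tendsto_of_tendsto_of_tendsto_of_le_of_le' hFa hupper ?_ ?_
  · exact Eventually.of_forall fun n => riemann_lower n (j n) (hjn n)
  · filter_upwards [hj1] with n hn
    have h1 := riemann_upper n (j n) hn (hjn n)
    have hpos := hstep_pos n
    have hlog : lsin ((j n : ℝ) * hstep n) ≤ Real.log 2 := by
      apply lsin_le_log_two
      · have : (0:ℝ) < (j n : ℝ) := Nat.cast_pos.2 hn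
        positivity
      · linarith [mul_hstep_lt_half (hjn n)]
    nlinarith
lemma sin_hstep_pos {n : ℕ} (hn : 1 ≤ n) : 0 < Real.sin (π / (2 * n + 1)) := by
  have hpi := Real.pi_pos
  apply Real.sin_pos_of_pos_of_lt_pi (hstep_pos n)
  have h1 : (1:ℝ) < 2 * n + 1 := by
    have : (1:ℝ) ≤ (n:ℝ) := by exact_mod_cast hn
    linarith
  calc π / (2 * n + 1) < π / 1 := by
        apply div_lt_div_of_pos_left hpi (by norm_num) h1
    _ = π := by norm_num

lemma sin_factor_pos {n i : ℕ} (h1 : 1 ≤ i) (h2 : i ≤ n) :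
    0 < Real.sin ((i:ℝ) * π / (2 * n + 1)) := by
  have := Real.pi_pos
  have h3 : (i:ℝ) * π / (2 * n + 1) = (i:ℝ) * hstep n := by
    unfold hstep; ring
  rw [h3]
  apply Real.sin_pos_of_pos_of_lt_pi
  · have : (0:ℝ) < (i:ℝ) := by exact_mod_cast h1
    have := hstep_pos n
    positivity
  · linarith [mul_hstep_lt_half h2]

lemma sN_pos {n j : ℕ} (hj : j ≤ n) : 0 < sN n j := by
  unfold sN
  apply Finset.prod_pos
  intro i hi
  rw [Finset.mem_Icc] at hi
  have hn : 1 ≤ n := le_trans hi.1 (le_trans hi.2 hj)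
  exact div_pos (sin_factor_pos hi.1 (le_trans hi.2 hj)) (sin_hstep_pos hn)

lemma log_sN {n j : ℕ} (hj : j ≤ n) :
    Real.log (sN n j) = Sl n j - j * lsin (hstep n) := by
  unfold sN
  rw [Real.log_prod]
  · have : ∀ i ∈ Finset.Icc 1 j,
        Real.log (Real.sin ((i:ℝ) * π / (2 * n + 1)) / Real.sin (π / (2 * n + 1)))
          = lsin ((i:ℝ) * hstep n) - lsin (hstep n) := by
      intro i hi
      rw [Finset.mem_Icc] at hi
      have hn : 1 ≤ n := le_trans hi.1 (le_trans hi.2 hj)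
      have hs1 := sin_factor_pos hi.1 (le_trans hi.2 hj)
      have hs2 := sin_hstep_pos hn
      have h3 : (i:ℝ) * π / (2 * n + 1) = (i:ℝ) * hstep n := by unfold hstep; ring
      rw [Real.log_div (by linarith) (by linarith)]
      unfold lsin
      rw [Real.log_mul (by norm_num) (by rw [← h3]; linarith),
          Real.log_mul (by norm_num) (by
            have : Real.sin (hstep n) = Real.sin (π / (2*n+1)) := rfl
            rw [this]; linarith), h3]
      have : Real.sin (hstep n) = Real.sin (π / (2*n+1)) := rfl
      rw [this]
      ring
    rw [Finset.sum_congr rfl this, Finset.sum_sub_distrib, Finset.sum_const,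
        Nat.card_Icc, Nat.add_sub_cancel, Sl]
    simp [smul_eq_mul]
  · intro i hi
    rw [Finset.mem_Icc] at hi
    have hn : 1 ≤ n := le_trans hi.1 (le_trans hi.2 hj)
    have hs1 := sin_factor_pos hi.1 (le_trans hi.2 hj)
    have hs2 := sin_hstep_pos hn
    positivity

noncomputable def qbin (n k : ℕ) : ℝ := sN n n / (sN n k * sN n (n - k))

lemma qbin_pos {n k : ℕ} (hk : k ≤ n) : 0 < qbin n k :=
  div_pos (sN_pos le_rfl) (mul_pos (sN_pos hk) (sN_pos (Nat.sub_le n k)))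

lemma log_qbin {n k : ℕ} (hk : k ≤ n) :
    Real.log (qbin n k) = Sl n n - Sl n k - Sl n (n - k) := by
  have h1 := sN_pos (le_refl n)
  have h2 := sN_pos hk
  have h3 := sN_pos (Nat.sub_le n k)
  rw [qbin, Real.log_div (by positivity) (by positivity),
      Real.log_mul (by positivity) (by positivity),
      log_sN (le_refl n), log_sN hk, log_sN (Nat.sub_le n k)]
  have hcast : ((n - k : ℕ) : ℝ) = (n : ℝ) - k := by
    rw [Nat.cast_sub hk]
  rw [hcast]
  ring

lemma qbin_symm {n k : ℕ} (hk : k ≤ n) : qbin n (n - k) = qbin n k := by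
  unfold qbin
  rw [Nat.sub_sub_self hk, mul_comm]

lemma qbin_step {n k : ℕ} (h2k : 2 * k < n) : qbin n k ≤ qbin n (k + 1) := by
  have hk1 : k + 1 ≤ n := by omega
  have hkn : k ≤ n := by omega
  have hnk1 : n - k = (n - (k + 1)) + 1 := by omega
  have hn1 : 1 ≤ n := by omega
  have hspos := sin_hstep_pos hn1
  have ha := sN_pos hkn
  have hb := sN_pos (Nat.sub_le n (k+1))
  have hT := sN_pos (le_refl n)
  have hs1 : 0 < Real.sin (((k+1:ℕ):ℝ) * π / (2 * n + 1)) := sin_factor_pos (by omega) hk1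
  have hs2 : 0 < Real.sin (((n-k:ℕ):ℝ) * π / (2 * n + 1)) := sin_factor_pos (by omega) (Nat.sub_le n k)
  have hsle : Real.sin (((k+1:ℕ):ℝ) * π / (2 * n + 1)) ≤ Real.sin (((n-k:ℕ):ℝ) * π / (2 * n + 1)) := by
    have e1 : ((k+1:ℕ):ℝ) * π / (2 * n + 1) = ((k+1:ℕ):ℝ) * hstep n := by unfold hstep; ring
    have e2 : ((n-k:ℕ):ℝ) * π / (2 * n + 1) = ((n-k:ℕ):ℝ) * hstep n := by unfold hstep; ring
    rw [e1, e2]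
    apply Real.sin_le_sin_of_le_of_le_pi_div_two
    · have := hstep_pos n
      have : (0:ℝ) ≤ ((k+1:ℕ):ℝ) := Nat.cast_nonneg _
      nlinarith [hstep_pos n, Real.pi_pos]
    · exact (mul_hstep_lt_half (Nat.sub_le n k)).le
    · have : ((k+1:ℕ):ℝ) ≤ ((n-k:ℕ):ℝ) := by
        have : k + 1 ≤ n - k := by omega
        exact_mod_cast this
      nlinarith [hstep_pos n]
  -- expand the products
  have hexp1 : sN n (k+1) = sN n k *
      (Real.sin (((k+1:ℕ):ℝ) * π / (2 * n + 1)) / Real.sin (π / (2 * n + 1))) := by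
    rw [sN, sN, Finset.prod_Icc_succ_top (by omega : 1 ≤ k + 1)]
  have hexp2 : sN n (n-k) = sN n (n-(k+1)) *
      (Real.sin (((n-k:ℕ):ℝ) * π / (2 * n + 1)) / Real.sin (π / (2 * n + 1))) := by
    rw [sN, sN, hnk1, Finset.prod_Icc_succ_top (by omega : 1 ≤ n - (k+1) + 1)]
  rw [qbin, qbin, hexp1, hexp2]
  rw [div_le_div_iff₀ (by positivity) (by
    have h1 : 0 < Real.sin (((k+1:ℕ):ℝ) * π / (2 * n + 1)) / Real.sin (π / (2 * n + 1)) :=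
      div_pos hs1 hspos
    positivity)]
  have hq : 0 < Real.sin (π / (2 * n + 1)) := hspos
  have hfrac : Real.sin (((k+1:ℕ):ℝ) * π / (2 * n + 1)) / Real.sin (π / (2 * n + 1))
      ≤ Real.sin (((n-k:ℕ):ℝ) * π / (2 * n + 1)) / Real.sin (π / (2 * n + 1)) := by gcongr
  have hco : (0:ℝ) ≤ sN n n * (sN n k * sN n (n - (k+1))) := by positivity
  nlinarith [mul_le_mul_of_nonneg_left hfrac hco]
lemma qbin_le_mid {n k : ℕ} (hk : k ≤ n) : qbin n k ≤ qbin n (n / 2) := by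
  have mono : ∀ d k : ℕ, k + d ≤ n / 2 → qbin n k ≤ qbin n (k + d) := by
    intro d
    induction d with
    | zero => intro k _; simp
    | succ d ih =>
      intro k hkd
      have h1 : k + d ≤ n / 2 := by omega
      refine le_trans (ih k h1) ?_
      have h2 : 2 * (k + d) < n := by omega
      have h3 : k + (d + 1) = (k + d) + 1 := by omega
      rw [h3]
      exact qbin_step h2
  rcases le_or_gt k (n / 2) with h | h
  · have := mono (n / 2 - k) k (by omega)
    rwa [Nat.add_sub_cancel' h] at this
  · have hnk : n - k ≤ n / 2 := by omega
    rw [← qbin_symm hk]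
    have := mono (n / 2 - (n - k)) (n - k) (by omega)
    rwa [Nat.add_sub_cancel' hnk] at this

lemma sixjN_eq (n : ℕ) : sixjN n = ∑ k ∈ Finset.range (n + 1), qbin n k ^ 4 := rfl

lemma sixjN_lower (n : ℕ) : qbin n (n / 2) ^ 4 ≤ sixjN n := by
  rw [sixjN_eq]
  apply Finset.single_le_sum (f := fun k => qbin n k ^ 4)
  · intro k _; positivity
  · exact Finset.mem_range.2 (Nat.lt_succ_of_le (Nat.div_le_self n 2))

lemma sixjN_upper (n : ℕ) : sixjN n ≤ (n + 1) * qbin n (n / 2) ^ 4 := by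
  rw [sixjN_eq]
  calc (∑ k ∈ Finset.range (n + 1), qbin n k ^ 4)
      ≤ ∑ _k ∈ Finset.range (n + 1), qbin n (n / 2) ^ 4 := by
        apply Finset.sum_le_sum
        intro k hk
        have hkn : k ≤ n := Nat.lt_succ_iff.1 (Finset.mem_range.1 hk)
        exact pow_le_pow_left₀ (qbin_pos hkn).le (qbin_le_mid hkn) 4
    _ = (n + 1) * qbin n (n / 2) ^ 4 := by
        rw [Finset.sum_const, Finset.card_range, nsmul_eq_mul]
        push_cast; ring

lemma sixjN_pos (n : ℕ) : 0 < sixjN n :=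
  lt_of_lt_of_le (pow_pos (qbin_pos (Nat.div_le_self n 2)) 4) (sixjN_lower n)

lemma nh_tendsto : Tendsto (fun n : ℕ => (n : ℝ) * hstep n) atTop (𝓝 (π / 2)) := by
  have hpi := Real.pi_pos
  have heq : ∀ n : ℕ, (n : ℝ) * hstep n = π / 2 - (π / 2) * (2 * (n:ℝ) + 1)⁻¹ := by
    intro n
    have hne : (2 * (n:ℝ) + 1) ≠ 0 := by positivity
    unfold hstep
    field_simp
    ring
  simp_rw [heq]
  have h1 : Tendsto (fun n : ℕ => (2 * (n:ℝ) + 1)) atTop atTop := by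
    apply Filter.tendsto_atTop_add_const_right
    exact (tendsto_natCast_atTop_atTop).const_mul_atTop (by norm_num)
  have h2 : Tendsto (fun n : ℕ => (2 * (n:ℝ) + 1)⁻¹) atTop (𝓝 0) :=
    tendsto_inv_atTop_zero.comp h1
  have := h2.const_mul (π / 2)
  have h3 := tendsto_const_nhds (x := π / 2) (f := atTop (α := ℕ)) |>.sub (h2.const_mul (π / 2))
  simpa using h3

lemma half_tendsto (j : ℕ → ℕ) (hb : ∀ n, |(j n : ℝ) - (n : ℝ) / 2| ≤ 1) :
    Tendsto (fun n => (j n : ℝ) * hstep n) atTop (𝓝 (π / 4)) := by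
  have heq : ∀ n, (j n : ℝ) * hstep n
      = (1 / 2) * ((n : ℝ) * hstep n) + ((j n : ℝ) - (n : ℝ) / 2) * hstep n := by
    intro n; ring
  simp_rw [heq]
  have h1 : Tendsto (fun n : ℕ => (1 / 2 : ℝ) * ((n : ℝ) * hstep n)) atTop (𝓝 (π / 4)) := by
    have := nh_tendsto.const_mul (1 / 2 : ℝ)
    rw [show (1 / 2 : ℝ) * (π / 2) = π / 4 by ring] at this
    exact this
  have h2 : Tendsto (fun n => ((j n : ℝ) - (n : ℝ) / 2) * hstep n) atTop (𝓝 0) := by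
    have hb' : ∀ n, ‖((j n : ℝ) - (n : ℝ) / 2) * hstep n‖ ≤ hstep n := by
      intro n
      rw [Real.norm_eq_abs, abs_mul, abs_of_pos (hstep_pos n)]
      calc |(j n : ℝ) - (n : ℝ) / 2| * hstep n ≤ 1 * hstep n :=
            mul_le_mul_of_nonneg_right (hb n) (hstep_pos n).le
        _ = hstep n := one_mul _
    exact squeeze_zero_norm hb' hstep_tendsto
  simpa using h1.add h2

lemma key_tendsto : Tendsto
    (fun n : ℕ => 2 * π / (2 * (n:ℝ) + 1) * (4 * Real.log (qbin n (n / 2))))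
    atTop (𝓝 (-16 * Flob (π / 4))) := by
  have hpi := Real.pi_pos
  have heq : ∀ n : ℕ, 2 * π / (2 * (n:ℝ) + 1) * (4 * Real.log (qbin n (n / 2)))
      = 8 * (hstep n * Sl n n - hstep n * Sl n (n / 2) - hstep n * Sl n (n - n / 2)) := by
    intro n
    rw [log_qbin (Nat.div_le_self n 2)]
    unfold hstep
    field_simp
    ring
  simp_rw [heq]
  have hfull : Tendsto (fun n => hstep n * Sl n n) atTop (𝓝 (Flob (π / 2))) := by
    apply Sl_tendsto (fun n => n) (fun n => le_rfl)
    · filter_upwards [eventually_ge_atTop 1] with n hn; exact hn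
    · exact ⟨by linarith, by linarith⟩
    · exact nh_tendsto
  have hdown : Tendsto (fun n => hstep n * Sl n (n / 2)) atTop (𝓝 (Flob (π / 4))) := by
    apply Sl_tendsto (fun n => n / 2) (fun n => Nat.div_le_self n 2)
    · filter_upwards [eventually_ge_atTop 2] with n hn; omega
    · exact ⟨by linarith, by linarith⟩
    · apply half_tendsto
      intro n
      rw [abs_le]
      constructor
      · have : (n / 2 : ℕ) ≥ ((n : ℝ) - 1) / 2 := by
          have := Nat.lt_succ_of_le (Nat.div_le_self n 2)
          have h2 : (n : ℝ) ≤ 2 * ((n / 2 : ℕ) : ℝ) + 1 := by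
            have : n ≤ 2 * (n / 2) + 1 := by omega
            exact_mod_cast this
          linarith
        linarith
      · have h2 : ((n / 2 : ℕ) : ℝ) ≤ (n : ℝ) / 2 := by
          have : (2 : ℝ) * ((n / 2 : ℕ) : ℝ) ≤ (n : ℝ) := by
            have : 2 * (n / 2) ≤ n := by omega
            exact_mod_cast this
          linarith
        linarith
  have hup : Tendsto (fun n => hstep n * Sl n (n - n / 2)) atTop (𝓝 (Flob (π / 4))) := by
    apply Sl_tendsto (fun n => n - n / 2) (fun n => Nat.sub_le n (n/2))
    · filter_upwards [eventually_ge_atTop 1] with n hn; omega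
    · exact ⟨by linarith, by linarith⟩
    · apply half_tendsto
      intro n
      rw [abs_le]
      have hc : ((n - n / 2 : ℕ) : ℝ) = (n : ℝ) - ((n / 2 : ℕ) : ℝ) := by
        rw [Nat.cast_sub (Nat.div_le_self n 2)]
      have h2 : (2 : ℝ) * ((n / 2 : ℕ) : ℝ) ≤ (n : ℝ) := by
        have : 2 * (n / 2) ≤ n := by omega
        exact_mod_cast this
      have h3 : (n : ℝ) ≤ 2 * ((n / 2 : ℕ) : ℝ) + 1 := by
        have : n ≤ 2 * (n / 2) + 1 := by omega
        exact_mod_cast this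
      constructor <;> [skip; skip] <;> rw [hc] <;> linarith
  have := ((hfull.sub hdown).sub hup).const_mul (8 : ℝ)
  rw [integral_lsin_half] at this
  rw [show (8:ℝ) * ((0 : ℝ) - Flob (π/4) - Flob (π/4)) = -16 * Flob (π/4) by ring] at this
  exact this
lemma abs_phiN (n : ℕ) : ‖phiN n‖ = 1 := by
  unfold phiN
  rw [norm_mul, norm_pow]
  have h1 : ‖(-1 : ℂ)‖ = 1 := by simp
  rw [h1, one_pow, one_mul]
  have hz : (((2 * (n:ℂ) + 1)) ^ 2 - 1) / (4 * (2 * (n:ℂ) + 1))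
      = ((((2 * (n:ℝ) + 1) ^ 2 - 1) / (4 * (2 * (n:ℝ) + 1)) : ℝ) : ℂ) := by
    push_cast; ring
  rw [hz, Complex.norm_exp]
  simp only [Complex.mul_re, Complex.mul_im, Complex.I_re, Complex.I_im,
    Complex.ofReal_re, Complex.ofReal_im]
  norm_num

/-- Part 3 of the Main Theorem (analytic content): for fixed `t r : ℕ` and `θ : ℤ`,
`(2π/(2n+1))·log| φ_{2n+1}^θ · (2n+1)^r · sixj_{2n+1}^{t+1} |` converges to
`−16·(t+1)·∫₀^{π/4} log(2 sin u) du = (2t+2)·Vol(Oct)`. -/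
theorem augmented_volume_conjecture (t r : ℕ) (θ : ℤ) :
    Tendsto
      (fun n : ℕ => 2 * Real.pi / (2 * n + 1) *
        Real.log ‖
          ((phiN n) ^ θ * ((2 * n + 1 : ℕ) : ℂ) ^ r * ((sixjN n : ℂ)) ^ (t + 1))‖)
      atTop
      (nhds (-16 * (t + 1) * ∫ u in (0:ℝ)..(Real.pi / 4), Real.log (2 * Real.sin u))) := by
  have hpi := Real.pi_pos
  have hN : ∀ n : ℕ, (0:ℝ) < 2 * (n:ℝ) + 1 := fun n => by positivity
  have habs : ∀ n : ℕ, ‖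
      ((phiN n) ^ θ * ((2 * n + 1 : ℕ) : ℂ) ^ r * ((sixjN n : ℂ)) ^ (t + 1))‖
      = (2 * (n:ℝ) + 1) ^ r * (sixjN n) ^ (t + 1) := by
    intro n
    rw [norm_mul, norm_mul, norm_zpow, abs_phiN, one_zpow, one_mul, norm_pow, norm_pow,
        Complex.norm_natCast, Complex.norm_real, Real.norm_eq_abs, abs_of_pos (sixjN_pos n)]
    push_cast; ring
  have hlog : ∀ n : ℕ, Real.log ((2 * (n:ℝ) + 1) ^ r * (sixjN n) ^ (t + 1))
      = r * Real.log (2 * (n:ℝ) + 1) + ((t:ℝ) + 1) * Real.log (sixjN n) := by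
    intro n
    rw [Real.log_mul (by positivity) (pow_ne_zero _ (ne_of_gt (sixjN_pos n))),
        Real.log_pow, Real.log_pow]
    push_cast; ring
  -- atop limits
  have h1 : Tendsto (fun n : ℕ => (2 * (n:ℝ) + 1)) atTop atTop := by
    apply Filter.tendsto_atTop_add_const_right
    exact (tendsto_natCast_atTop_atTop).const_mul_atTop (by norm_num)
  have hlogdiv : Tendsto (fun x : ℝ => Real.log x / x) atTop (𝓝 0) := by
    simpa using Real.isLittleO_log_id_atTop.tendsto_div_nhds_zero
  have h2 : Tendsto (fun n : ℕ => Real.log (2 * (n:ℝ) + 1) / (2 * (n:ℝ) + 1)) atTop (𝓝 0) :=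
    hlogdiv.comp h1
  -- part A
  have hA : Tendsto (fun n : ℕ => 2 * π / (2 * (n:ℝ) + 1) * ((r:ℝ) * Real.log (2 * (n:ℝ) + 1)))
      atTop (𝓝 0) := by
    have := h2.const_mul (2 * π * (r:ℝ))
    rw [mul_zero] at this
    apply Tendsto.congr _ this
    intro n
    have := hN n
    field_simp
  -- part C : the log (n+1) error term
  have hC : Tendsto (fun n : ℕ => 2 * π / (2 * (n:ℝ) + 1) * (((t:ℝ) + 1) * Real.log ((n:ℝ) + 1)))
      atTop (𝓝 0) := by
    have hup := h2.const_mul (2 * π * ((t:ℝ) + 1))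
    rw [mul_zero] at hup
    refine tendsto_of_tendsto_of_tendsto_of_le_of_le tendsto_const_nhds hup ?_ ?_
    · intro n
      dsimp only
      have hl : (0:ℝ) ≤ Real.log ((n:ℝ) + 1) := Real.log_nonneg (by
        have : (0:ℝ) ≤ (n:ℝ) := Nat.cast_nonneg n
        linarith)
      have : (0:ℝ) ≤ 2 * π / (2 * (n:ℝ) + 1) := by positivity
      positivity
    · intro n
      dsimp only
      have hle : Real.log ((n:ℝ) + 1) ≤ Real.log (2 * (n:ℝ) + 1) := by
        apply Real.log_le_log (by positivity)
        have : (0:ℝ) ≤ (n:ℝ) := Nat.cast_nonneg n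
        linarith
      have hc : (0:ℝ) ≤ 2 * π / (2 * (n:ℝ) + 1) * ((t:ℝ) + 1) := by positivity
      have e1 : 2 * π / (2 * (n:ℝ) + 1) * (((t:ℝ) + 1) * Real.log ((n:ℝ) + 1))
          = (2 * π / (2 * (n:ℝ) + 1) * ((t:ℝ) + 1)) * Real.log ((n:ℝ) + 1) := by ring
      have e2 : 2 * π * ((t:ℝ) + 1) * (Real.log (2 * (n:ℝ) + 1) / (2 * (n:ℝ) + 1))
          = (2 * π / (2 * (n:ℝ) + 1) * ((t:ℝ) + 1)) * Real.log (2 * (n:ℝ) + 1) := by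
        field_simp
      rw [e1]
      calc (2 * π / (2 * (n:ℝ) + 1) * ((t:ℝ) + 1)) * Real.log ((n:ℝ) + 1)
          ≤ (2 * π / (2 * (n:ℝ) + 1) * ((t:ℝ) + 1)) * Real.log (2 * (n:ℝ) + 1) :=
            mul_le_mul_of_nonneg_left hle hc
        _ = 2 * π * ((t:ℝ) + 1) * (Real.log (2 * (n:ℝ) + 1) / (2 * (n:ℝ) + 1)) := e2.symm
  -- lower part : key_tendsto scaled
  have hKey : Tendsto (fun n : ℕ => 2 * π / (2 * (n:ℝ) + 1)
        * (((t:ℝ) + 1) * (4 * Real.log (qbin n (n / 2)))))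
      atTop (𝓝 (((t:ℝ) + 1) * (-16 * Flob (π / 4)))) := by
    have := key_tendsto.const_mul ((t:ℝ) + 1)
    apply Tendsto.congr _ this
    intro n; ring
  -- part B via squeeze
  have hB : Tendsto (fun n : ℕ => 2 * π / (2 * (n:ℝ) + 1) * (((t:ℝ) + 1) * Real.log (sixjN n)))
      atTop (𝓝 (((t:ℝ) + 1) * (-16 * Flob (π / 4)))) := by
    have hupperT : Tendsto (fun n : ℕ =>
        2 * π / (2 * (n:ℝ) + 1) * (((t:ℝ) + 1) * (4 * Real.log (qbin n (n / 2))))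
        + 2 * π / (2 * (n:ℝ) + 1) * (((t:ℝ) + 1) * Real.log ((n:ℝ) + 1)))
        atTop (𝓝 (((t:ℝ) + 1) * (-16 * Flob (π / 4)))) := by
      have := hKey.add hC
      simpa using this
    refine tendsto_of_tendsto_of_tendsto_of_le_of_le hKey hupperT ?_ ?_
    · intro n
      dsimp only
      have hq := qbin_pos (Nat.div_le_self n 2)
      have hlow : 4 * Real.log (qbin n (n / 2)) ≤ Real.log (sixjN n) := by
        have := Real.log_le_log (by positivity : (0:ℝ) < qbin n (n / 2) ^ 4) (sixjN_lower n)
        rwa [Real.log_pow] at this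
        -- note : Real.log_pow : log (x ^ n) = n * log x ; cast of 4
      have hc : (0:ℝ) ≤ 2 * π / (2 * (n:ℝ) + 1) * ((t:ℝ) + 1) := by positivity
      have := mul_le_mul_of_nonneg_left hlow hc
      nlinarith [this]
    · intro n
      dsimp only
      have hq := qbin_pos (Nat.div_le_self n 2)
      have hhigh : Real.log (sixjN n) ≤ Real.log ((n:ℝ) + 1) + 4 * Real.log (qbin n (n / 2)) := by
        have h3 := Real.log_le_log (sixjN_pos n) (sixjN_upper n)
        rw [Real.log_mul (by positivity) (by positivity), Real.log_pow] at h3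
        push_cast at h3 ⊢
        linarith
      have hc : (0:ℝ) ≤ 2 * π / (2 * (n:ℝ) + 1) * ((t:ℝ) + 1) := by positivity
      have := mul_le_mul_of_nonneg_left hhigh hc
      nlinarith [this]
  -- combine
  have hF : (∫ u in (0:ℝ)..(π / 4), Real.log (2 * Real.sin u)) = Flob (π / 4) := rfl
  have heq : (0:ℝ) + ((t:ℝ) + 1) * (-16 * Flob (π / 4))
      = -16 * ((t:ℝ) + 1) * ∫ u in (0:ℝ)..(π / 4), Real.log (2 * Real.sin u) := by
    rw [hF]; ring
  have hsum := hA.add hB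
  rw [heq] at hsum
  apply Tendsto.congr _ hsum
  intro n
  rw [habs n, hlog n]
  ring

end AuxVolumeConjecture
end
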